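/- arXiv:math/9204206 — 6 statements merged into one kernel-verified Lean document; each statement's English description precedes it below -/
import Mathlib

section
/- If i ≠ 1 and w is a reduced word in F that does not begin or end with x_1 or x_1^{-1} (and w ≠ 1), then σ_i(w) also is a nontrivial reduced word that does not begin or end with x_1 or x_1^{-1}, and the same holds for σ_i^{-1}(w). -/
/-- The free group on generators `x 1, x 2, x 3, …`. -/
abbrev F := FreeGroup ℕ+

/-- The generators of `F`. -/
noncomputable def x (i : ℕ+) : F := FreeGroup.of i

/-- `σ` is the family of Artin automorphisms:
`σ i (x i) = x i * x (i+1) * (x i)⁻¹`, `σ i (x (i+1)) = x i`, `σ i (x j) = x j` otherwise. -/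
def IsArtin (σ : ℕ+ → MulAut F) : Prop :=
  ∀ i : ℕ+, σ i (x i) = x i * x (i + 1) * (x i)⁻¹ ∧ σ i (x (i + 1)) = x i ∧
    ∀ j : ℕ+, j ≠ i → j ≠ i + 1 → σ i (x j) = x j

/-- The set of nontrivial elements of `F` whose reduced word neither begins
nor ends with `x 1` or `(x 1)⁻¹`. -/
def W : Set F :=
  {w | w ≠ 1 ∧ (∀ p ∈ w.toWord.head?, p.1 ≠ 1) ∧ (∀ p ∈ w.toWord.getLast?, p.1 ≠ 1)}

open FreeGroup List

/-- The no-cancellation relation between adjacent letters. -/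
def P (a b : ℕ+ × Bool) : Prop := ¬(a.1 = b.1 ∧ a.2 = !b.2)

lemma reduce_eq_self_of_chain : ∀ {L : List (ℕ+ × Bool)}, L.Chain' P → FreeGroup.reduce L = L := by
  intro L h
  induction L with
  | nil => rfl
  | cons a t ih =>
    have ht : t.Chain' P := h.tail
    rw [reduce.cons, ih ht]
    cases t with
    | nil => rfl
    | cons b t2 =>
      have hab : P a b := (List.isChain_cons_cons.1 h).1
      simp only [P] at hab
      simp [hab]

lemma chain_of_reduce : ∀ {L : List (ℕ+ × Bool)}, FreeGroup.reduce L = L → L.Chain' P := by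
  intro L h
  induction L with
  | nil => exact List.IsChain.nil
  | cons a t ih =>
    have hlen : (FreeGroup.reduce t).length ≤ t.length := (reduce.red (L := t)).length_le
    rw [reduce.cons] at h
    rcases ht : FreeGroup.reduce t with _ | ⟨b, t2⟩
    · rw [ht] at h
      simp at h
      subst h
      exact List.IsChain.singleton a
    · rw [ht] at h hlen
      by_cases hc : a.1 = b.1 ∧ a.2 = !b.2
      · simp only [if_pos hc] at h
        exfalso
        have : t2.length = t.length + 1 := by rw [h]; simp
        simp at hlen; omega
      · simp only [if_neg hc] at h
        have h2 : t = b :: t2 := (List.tail_eq_of_cons_eq h).symm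
        subst h2
        exact List.isChain_cons_cons.2 ⟨hc, ih ht⟩

lemma chain_toWord (w : F) : w.toWord.Chain' P := chain_of_reduce (reduce_toWord w)

lemma toWord_mk_of_chain {L : List (ℕ+ × Bool)} (h : L.Chain' P) :
    (FreeGroup.mk L).toWord = L := by rw [toWord_mk, reduce_eq_self_of_chain h]

/-- If the concatenation of the reduced words is chain-reduced, toWord of product is concat. -/
lemma toWord_mul_of_chain {u v : F} (h : (u.toWord ++ v.toWord).Chain' P) :
    (u * v).toWord = u.toWord ++ v.toWord := by
  conv_lhs => rw [← mk_toWord (x := u), ← mk_toWord (x := v), mul_mk]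
  exact toWord_mk_of_chain h

/-- The subgroup of words with no letter `x 1`. -/
def Hset : Subgroup F where
  carrier := {w | ∀ p ∈ w.toWord, p.1 ≠ 1}
  one_mem' := by simp [toWord_one]
  mul_mem' := by
    intro a b ha hb p hp
    have := (toWord_mul_sublist a b).subset hp
    rcases List.mem_append.1 this with h | h
    · exact ha p h
    · exact hb p h
  inv_mem' := by
    intro a ha p hp
    rw [toWord_inv] at hp
    simp only [invRev, List.mem_reverse, List.mem_map] at hp
    obtain ⟨q, hq, rfl⟩ := hp
    exact ha q hq

lemma mem_closure_of_letters (S : Set ℕ+) :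
    ∀ (L : List (ℕ+ × Bool)), (∀ p ∈ L, p.1 ∈ S) →
      FreeGroup.mk L ∈ Subgroup.closure (FreeGroup.of '' S) := by
  intro L
  induction L with
  | nil => intro _; exact (Subgroup.one_mem _ : FreeGroup.mk [] ∈ _)
  | cons a t ih =>
    intro h
    have h1 : FreeGroup.mk [a] ∈ Subgroup.closure (FreeGroup.of '' S) := by
      have hm : FreeGroup.of a.1 ∈ Subgroup.closure (FreeGroup.of '' S) :=
        Subgroup.subset_closure ⟨a.1, h a (List.mem_cons_self), rfl⟩
      obtain ⟨a1, a2⟩ := a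
      cases a2
      · have : (FreeGroup.mk [(a1, false)] : F) = (FreeGroup.of a1)⁻¹ := by
          rw [show (FreeGroup.of a1 : F) = FreeGroup.mk [(a1, true)] from rfl, inv_mk]
          simp [invRev]
        rw [this]; exact Subgroup.inv_mem _ hm
      · exact hm
    have h2 := ih (fun p hp => h p (List.mem_cons_of_mem a hp))
    have : FreeGroup.mk (a :: t) = FreeGroup.mk [a] * FreeGroup.mk t := by
      rw [mul_mk]; rfl
    rw [this]; exact Subgroup.mul_mem _ h1 h2

lemma x_mem_Hset {j : ℕ+} (hj : j ≠ 1) : x j ∈ Hset := by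
  intro p hp
  rw [x, toWord_of] at hp
  simp only [List.mem_singleton] at hp
  subst hp; exact hj

lemma map_Hset (φ : F →* F) (hφ : ∀ j : ℕ+, j ≠ 1 → φ (x j) ∈ Hset) {w : F} (hw : w ∈ Hset) :
    φ w ∈ Hset := by
  have hcl : w ∈ Subgroup.closure (FreeGroup.of '' {j : ℕ+ | j ≠ 1}) := by
    rw [← mk_toWord (x := w)]
    exact mem_closure_of_letters _ _ hw
  have hle : Subgroup.closure (FreeGroup.of '' {j : ℕ+ | j ≠ 1}) ≤ Hset.comap φ := by
    rw [Subgroup.closure_le]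
    rintro g ⟨j, hj, rfl⟩
    exact hφ j hj
  exact hle hcl

lemma map_ones (φ : F →* F) (h1 : φ (x 1) = x 1) {w : F} (hw : ∀ p ∈ w.toWord, p.1 = 1) :
    φ w = w := by
  have hcl : w ∈ Subgroup.closure (FreeGroup.of '' {j : ℕ+ | j = 1}) := by
    rw [← mk_toWord (x := w)]
    exact mem_closure_of_letters _ _ hw
  have hle : Subgroup.closure (FreeGroup.of '' {j : ℕ+ | j = 1}) ≤ φ.eqLocus (MonoidHom.id F) := by
    rw [Subgroup.closure_le]
    rintro g ⟨j, hj, rfl⟩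
    simp only [Set.mem_setOf_eq] at hj
    subst hj
    exact h1
  exact hle hcl

lemma Hset_mem_W {h : F} (hh : h ∈ Hset) (h1 : h ≠ 1) : h ∈ W :=
  ⟨h1, fun p hp => hh p (List.mem_of_mem_head? hp),
    fun p hp => hh p (List.mem_of_mem_getLast? hp)⟩

lemma glue {h r v : F} (hh : h ∈ Hset) (h1 : h ≠ 1)
    (hr : ∀ p ∈ r.toWord, p.1 = 1) (r1 : r ≠ 1) (hv : v ∈ W) :
    h * r * v ∈ W := by
  obtain ⟨v1, vh, vl⟩ := hv
  have hA : h.toWord ≠ [] := fun e => h1 (toWord_eq_nil_iff.1 e)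
  have hR : r.toWord ≠ [] := fun e => r1 (toWord_eq_nil_iff.1 e)
  have hB : v.toWord ≠ [] := fun e => v1 (toWord_eq_nil_iff.1 e)
  have cRB : (r.toWord ++ v.toWord).Chain' P := by
    apply List.IsChain.append (chain_toWord r) (chain_toWord v)
    intro p hp q hq hc
    exact vh q hq (hc.1 ▸ hr p (List.mem_of_mem_getLast? hp))
  have eRB : (r * v).toWord = r.toWord ++ v.toWord := toWord_mul_of_chain cRB
  have cARB : (h.toWord ++ (r.toWord ++ v.toWord)).Chain' P := by
    apply List.IsChain.append (chain_toWord h) cRB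
    intro p hp q hq hc
    rw [List.head?_append_of_ne_nil _ hR] at hq
    exact hh p (List.mem_of_mem_getLast? hp) (hc.1.trans (hr q (List.mem_of_mem_head? hq)))
  have e : (h * r * v).toWord = h.toWord ++ (r.toWord ++ v.toWord) := by
    rw [mul_assoc, toWord_mul_of_chain (by rw [eRB]; exact cARB), eRB]
  refine ⟨?_, ?_, ?_⟩
  · intro e1
    rw [e1, toWord_one] at e
    exact hA (List.append_eq_nil_iff.1 e.symm).1
  · intro p hp
    rw [e, List.head?_append_of_ne_nil _ hA] at hp
    exact hh p (List.mem_of_mem_head? hp)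
  · intro p hp
    rw [e, List.getLast?_append_of_ne_nil _ (by simp [hB]),
      List.getLast?_append_of_ne_nil _ hB] at hp
    exact vl p hp

lemma map_W (φ : F →* F) (hinj : Function.Injective φ) (hone : φ (x 1) = x 1)
    (hH : ∀ j : ℕ+, j ≠ 1 → φ (x j) ∈ Hset) : ∀ w ∈ W, φ w ∈ W := by
  have key : ∀ n : ℕ, ∀ w : F, w.toWord.length ≤ n → w ∈ W → φ w ∈ W := by
    intro n
    induction n using Nat.strong_induction_on with
    | _ n ih =>
      intro w hlen hw
      obtain ⟨w1, wh, wl⟩ := hw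
      have hne : φ w ≠ 1 := fun e => w1 (hinj (by rw [e, _root_.map_one]))
      by_cases hall : ∀ p ∈ w.toWord, p.1 ≠ 1
      · exact Hset_mem_W (map_Hset φ hH hall) hne
      · push_neg at hall
        obtain ⟨p0, hp0, hp01⟩ := hall
        set pr : ℕ+ × Bool → Bool := fun p => decide (p.1 = 1) with hpr
        set L := w.toWord with hLdef
        set A := L.takeWhile (fun p => !pr p) with hAdef
        set D := L.dropWhile (fun p => !pr p) with hDdef
        set R := D.takeWhile pr with hRdef
        set B := D.dropWhile pr with hBdef
        have hLAD : A ++ D = L := List.takeWhile_append_dropWhile ..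
        have hDRB : R ++ B = D := List.takeWhile_append_dropWhile ..
        have hLnil : L ≠ [] := fun e => w1 (toWord_eq_nil_iff.1 e)
        have hD : D ≠ [] := by
          intro e
          rw [hDdef, List.dropWhile_eq_nil_iff] at e
          have := e p0 hp0
          simp only [hpr] at this
          simp at this
          exact this hp01
        have hDhead : pr (D.head hD) = true := by
          have := List.head_dropWhile_not (fun p => !pr p) (hDdef ▸ hD)
          simpa [hDdef] using this
        have hA : A ≠ [] := by
          intro e
          rw [hAdef, List.takeWhile_eq_nil_iff] at e
          have hpos : 0 < L.length := List.length_pos_iff.2 hLnil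
          have h0 := e hpos
          have hmem : L.get ⟨0, hpos⟩ ∈ L.head? := by
            rw [List.head?_eq_head hLnil]
            simp [List.getElem_zero]
          have := wh _ hmem
          simp only [hpr] at h0
          simp at h0
          exact this h0
        have hR : R ≠ [] := by
          intro e
          rw [hRdef, List.takeWhile_eq_nil_iff] at e
          have hpos : 0 < D.length := List.length_pos_iff.2 hD
          refine e hpos ?_
          have : D.get ⟨0, hpos⟩ = D.head hD := by simp [List.getElem_zero]
          rw [this]
          exact hDhead
        have hlast : ∀ p ∈ L.getLast?, p.1 ≠ 1 := wl
        have hB : B ≠ [] := by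
          intro e
          have hDR : D = R := by rw [← hDRB, e, List.append_nil]
          have hlastL : L.getLast hLnil ∈ L.getLast? := by
            rw [List.getLast?_eq_getLast hLnil]; rfl
          have hgl : L.getLast? = D.getLast? := by
            rw [← hLAD, List.getLast?_append_of_ne_nil _ hD]
          have h1 : L.getLast hLnil ∈ R := by
            rw [← hDR]
            exact List.mem_of_mem_getLast? (hgl ▸ hlastL)
          have h2 := List.mem_takeWhile_imp (hRdef ▸ h1)
          simp only [hpr] at h2
          simp at h2
          exact hlast _ hlastL h2
        have cL : L.Chain' P := chain_toWord w
        have cA : A.Chain' P := cL.prefix (hAdef ▸ List.takeWhile_prefix _)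
        have cD : D.Chain' P := cL.suffix (hDdef ▸ List.dropWhile_suffix _)
        have cR : R.Chain' P := cD.prefix (hRdef ▸ List.takeWhile_prefix _)
        have cB : B.Chain' P := cD.suffix (hBdef ▸ List.dropWhile_suffix _)
        set a := FreeGroup.mk A with hadef
        set r := FreeGroup.mk R with hrdef
        set b := FreeGroup.mk B with hbdef
        have eA : a.toWord = A := toWord_mk_of_chain cA
        have eR : r.toWord = R := toWord_mk_of_chain cR
        have eB : b.toWord = B := toWord_mk_of_chain cB
        have hw_eq : w = a * (r * b) := by
          rw [hadef, hrdef, hbdef, mul_mk, mul_mk, hDRB, hLAD]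
          exact mk_toWord.symm
        -- a ∈ Hset
        have haH : a ∈ Hset := by
          intro p hp
          rw [eA] at hp
          have := List.mem_takeWhile_imp (hAdef ▸ hp)
          simp only [hpr] at this
          simpa using this
        have ha1 : a ≠ 1 := fun e => hA (by rw [← eA, e, toWord_one])
        -- r letters are all 1
        have hrone : ∀ p ∈ r.toWord, p.1 = 1 := by
          intro p hp
          rw [eR] at hp
          have := List.mem_takeWhile_imp (hRdef ▸ hp)
          simp only [hpr] at this
          simpa using this
        have hr1 : r ≠ 1 := fun e => hR (by rw [← eR, e, toWord_one])
        -- b ∈ W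
        have hbW : b ∈ W := by
          refine ⟨fun e => hB (by rw [← eB, e, toWord_one]), ?_, ?_⟩
          · intro p hp
            rw [eB, List.head?_eq_head hB] at hp
            simp only [Option.mem_def, Option.some.injEq] at hp
            have hb' : pr (B.head hB) = false := List.head_dropWhile_not pr hB
            rw [hp] at hb'
            simp only [hpr] at hb'
            simpa using hb'
          · intro p hp
            rw [eB] at hp
            apply hlast p
            rw [← hLAD, List.getLast?_append_of_ne_nil _ hD, ← hDRB,
              List.getLast?_append_of_ne_nil _ hB]
            exact hp
        -- induction
        have hblen : B.length < n := by
          have : A.length + (R.length + B.length) = L.length := by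
            rw [← List.length_append, ← List.length_append, hDRB, hLAD]
          have hApos : 0 < A.length := List.length_pos_iff.2 hA
          omega
        have hφb : φ b ∈ W := ih B.length hblen b (le_of_eq (by rw [eB])) hbW
        -- conclude
        have : φ w = φ a * r * φ b := by
          rw [hw_eq, _root_.map_mul, _root_.map_mul, ← mul_assoc, map_ones φ hone hrone]
        rw [this]
        exact glue (map_Hset φ hH haH) (fun e => ha1 (hinj (by rw [e, _root_.map_one])))
          hrone hr1 hφb
  exact fun w hw => key w.toWord.length w le_rfl hw

theorem stmt3 (σ : ℕ+ → MulAut F) (hσ : IsArtin σ) (i : ℕ+) (hi : i ≠ 1)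
    (w : F) (hw : w ∈ W) : σ i w ∈ W ∧ (σ i)⁻¹ w ∈ W := by
  obtain ⟨hσ1, hσ2, hσ3⟩ := hσ i
  have h1i : (1 : ℕ+) ≠ i := Ne.symm hi
  have h1i1 : (1 : ℕ+) ≠ i + 1 := (PNat.lt_add_left 1 i).ne
  have hii1 : i ≠ i + 1 := (PNat.lt_add_right i 1).ne
  have hi1 : i + 1 ≠ 1 := Ne.symm h1i1
  have hfix : σ i (x 1) = x 1 := hσ3 1 h1i h1i1
  -- facts about the inverse
  have hinv1 : (σ i)⁻¹ (x 1) = x 1 := by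
    apply (σ i).injective
    rw [MulAut.apply_inv_self, hfix]
  have hinvi : (σ i)⁻¹ (x i) = x (i + 1) := by
    apply (σ i).injective
    rw [MulAut.apply_inv_self, hσ2]
  have hinvi1 : (σ i)⁻¹ (x (i + 1)) = (x (i + 1))⁻¹ * x i * x (i + 1) := by
    apply (σ i).injective
    rw [MulAut.apply_inv_self, _root_.map_mul, _root_.map_mul, _root_.map_inv, hσ1, hσ2]
    group
  have hinvj : ∀ j : ℕ+, j ≠ i → j ≠ i + 1 → (σ i)⁻¹ (x j) = x j := by
    intro j hji hji1
    apply (σ i).injective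
    rw [MulAut.apply_inv_self, hσ3 j hji hji1]
  -- Hset conditions
  have hH : ∀ j : ℕ+, j ≠ 1 → (σ i).toMonoidHom (x j) ∈ Hset := by
    intro j hj
    by_cases hji : j = i
    · show σ i (x j) ∈ Hset
      rw [hji, hσ1]
      exact Subgroup.mul_mem _ (Subgroup.mul_mem _ (x_mem_Hset hi) (x_mem_Hset hi1))
        (Subgroup.inv_mem _ (x_mem_Hset hi))
    by_cases hji1 : j = i + 1
    · show σ i (x j) ∈ Hset
      rw [hji1, hσ2]
      exact x_mem_Hset hi
    · show σ i (x j) ∈ Hset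
      rw [hσ3 j hji hji1]
      exact x_mem_Hset hj
  have hH' : ∀ j : ℕ+, j ≠ 1 → ((σ i)⁻¹ : MulAut F).toMonoidHom (x j) ∈ Hset := by
    intro j hj
    by_cases hji : j = i
    · show (σ i)⁻¹ (x j) ∈ Hset
      rw [hji, hinvi]
      exact x_mem_Hset hi1
    by_cases hji1 : j = i + 1
    · show (σ i)⁻¹ (x j) ∈ Hset
      rw [hji1, hinvi1]
      exact Subgroup.mul_mem _ (Subgroup.mul_mem _ (Subgroup.inv_mem _ (x_mem_Hset hi1))
        (x_mem_Hset hi)) (x_mem_Hset hi1)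
    · show (σ i)⁻¹ (x j) ∈ Hset
      rw [hinvj j hji hji1]
      exact x_mem_Hset hj
  constructor
  · exact map_W (σ i).toMonoidHom (σ i).injective hfix hH w hw
  · exact map_W ((σ i)⁻¹ : MulAut F).toMonoidHom ((σ i)⁻¹ : MulAut F).injective hinv1 hH' w hw
end

section
/- If w ∈ W (w is a nontrivial element of F whose reduced word does not begin or end with x_1^{±1}), then σ_1(x_1 w x_1^{-1}) = x_1 w' x_1^{-1} for some w' ∈ W. -/
namespace Stmt5Aux

abbrev Ltr := ℕ+ × Bool

/-- image of a single letter under `ρ = conj(x₁⁻¹) ∘ σ₁`. -/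
def f (a : Ltr) : List Ltr :=
  if a.1 = 1 then [(2, a.2)] else if a.1 = 2 then [(1, a.2)] else [(1, false), a, (1, true)]

def flat : List Ltr → List Ltr
  | [] => []
  | a :: L => f a ++ flat L

def IsRed (L : List Ltr) : Prop := L.Chain' fun p q => ¬(p.1 = q.1 ∧ p.2 = !q.2)

lemma reduce_cons' (a : Ltr) (L : List Ltr) : FreeGroup.reduce (a :: L) =
    match FreeGroup.reduce L with
    | [] => [a]
    | b :: t => if a.1 = b.1 ∧ a.2 = !b.2 then t else a :: b :: t := by
  rw [FreeGroup.reduce.cons]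
  rcases FreeGroup.reduce L with _ | ⟨b, t⟩ <;> rfl

lemma reduce_eq_cons {M : List Ltr} {p : Ltr} {t : List Ltr} (a : Ltr)
    (h : FreeGroup.reduce M = p :: t) (hc : ¬(a.1 = p.1 ∧ a.2 = !p.2)) :
    FreeGroup.reduce (a :: M) = a :: p :: t := by
  rw [reduce_cons', h]; exact if_neg hc

lemma reduce_eq_cancel {M : List Ltr} {p : Ltr} {t : List Ltr} (a : Ltr)
    (h : FreeGroup.reduce M = p :: t) (hc : a.1 = p.1 ∧ a.2 = !p.2) :
    FreeGroup.reduce (a :: M) = t := by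
  rw [reduce_cons', h]; exact if_pos hc

lemma reduce_eq_nil {M : List Ltr} (a : Ltr) (h : FreeGroup.reduce M = []) :
    FreeGroup.reduce (a :: M) = [a] := by
  rw [reduce_cons', h]

lemma isRed_reduce (L : List Ltr) : IsRed (FreeGroup.reduce L) := by
  induction L with
  | nil => simp [IsRed, List.Chain']
  | cons a L ih =>
    rw [reduce_cons']
    rcases h : FreeGroup.reduce L with _ | ⟨b, t⟩
    · simp [IsRed, List.Chain']
    · rw [h] at ih
      show IsRed (if a.1 = b.1 ∧ a.2 = !b.2 then t else a :: b :: t)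
      by_cases hc : a.1 = b.1 ∧ a.2 = !b.2
      · rw [if_pos hc]
        exact ih.tail
      · rw [if_neg hc]
        exact List.isChain_cons_cons.2 ⟨hc, ih⟩

/-- The inductive invariant describing the head of `reduce (flat L)`. -/
def Q (a : Ltr) (T : List Ltr) : Prop :=
  (a.1 = 1 → T.head? = some (2, a.2)) ∧
  (a.1 = 2 → a.2 = false → ∃ t, T = (1, false) :: t ∧ ∀ p ∈ t.head?, p.1 = 1 ∨ p.1 = 2) ∧
  (a.1 = 2 → a.2 = true → ∃ p t, T = p :: t ∧ p ≠ (1, false) ∧ p.1 ≠ 2) ∧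
  (a.1 ≠ 1 → a.1 ≠ 2 → ∃ t, T = (1, false) :: a :: t)

lemma phi : ∀ (L : List Ltr) (a : Ltr), IsRed (a :: L) → Q a (FreeGroup.reduce (flat (a :: L))) := by
  have ne12 : ¬((1 : ℕ+) = 2) := by decide
  have ne21 : ¬((2 : ℕ+) = 1) := by decide
  intro L
  induction L with
  | nil =>
    rintro ⟨i, d⟩ -
    by_cases hi1 : i = 1
    · subst hi1
      refine ⟨fun _ => ?_, fun h => absurd h ne12, fun h => absurd h ne12,
        fun h => absurd rfl h⟩
      simp [flat, f, FreeGroup.reduce]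
    by_cases hi2 : i = 2
    · subst hi2
      refine ⟨fun h => absurd h ne21, fun _ hd => ?_, fun _ hd => ?_,
        fun _ h => absurd rfl h⟩
      · subst hd
        exact ⟨[], by simp [flat, f, FreeGroup.reduce], by simp⟩
      · subst hd
        exact ⟨(1, true), [], by simp [flat, f, FreeGroup.reduce], by simp, ne12⟩
    · refine ⟨fun h => absurd h hi1, fun h => absurd h hi2, fun h => absurd h hi2,
        fun _ _ => ⟨[(1, true)], ?_⟩⟩
      have h1 : FreeGroup.reduce [((1 : ℕ+), true)] = [(1, true)] := rfl
      have h2 := reduce_eq_cons (i, d) h1 (by rintro ⟨h, -⟩; exact hi1 h)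
      have h3 := reduce_eq_cons ((1 : ℕ+), false) h2 (by rintro ⟨h, -⟩; exact hi1 h.symm)
      show FreeGroup.reduce (f (i, d) ++ []) = _
      simp only [f, if_neg hi1, if_neg hi2]
      simpa using h3
  | cons b L ih =>
    rintro ⟨i, d⟩ hred
    obtain ⟨j, e⟩ := b
    have hr1 : ¬(i = j ∧ d = !e) := by
      have := (List.isChain_cons_cons.1 hred).1; simpa using this
    have hr2 : IsRed ((j, e) :: L) := (List.isChain_cons_cons.1 hred).2
    obtain ⟨Q1, Q2, Q3, Q4⟩ := ih (j, e) hr2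
    have hflat : flat ((i, d) :: (j, e) :: L) = f (i, d) ++ flat ((j, e) :: L) := rfl
    by_cases hi1 : i = 1
    · subst hi1
      -- f (1,d) = [(2,d)] : no cancellation against the head of T'
      have hform : ∃ p t, FreeGroup.reduce (flat ((j, e) :: L)) = p :: t ∧
          ¬((2 : ℕ+) = p.1 ∧ d = !p.2) := by
        by_cases hj1 : j = 1
        · subst hj1
          have h1 := Q1 rfl
          rcases hT : FreeGroup.reduce (flat (((1 : ℕ+), e) :: L)) with _ | ⟨p, t⟩
          · rw [hT] at h1; simp at h1
          · rw [hT] at h1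
            simp only [List.head?_cons, Option.some.injEq] at h1
            subst h1
            have hde : d = e := by cases d <;> cases e <;> simp_all
            refine ⟨_, _, rfl, ?_⟩
            rintro ⟨-, hb⟩
            rw [hde] at hb
            cases e <;> simp at hb
        by_cases hj2 : j = 2
        · subst hj2
          rcases Bool.eq_false_or_eq_true e with he | he
          · subst he
            obtain ⟨p, t, ht, -, hp⟩ := Q3 rfl rfl
            exact ⟨_, _, ht, by rintro ⟨h, -⟩; exact hp h.symm⟩
          · subst he
            obtain ⟨t, ht, -⟩ := Q2 rfl rfl
            exact ⟨_, _, ht, by rintro ⟨h, -⟩; exact ne21 h⟩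
        · obtain ⟨t, ht⟩ := Q4 hj1 hj2
          exact ⟨_, _, ht, by rintro ⟨h, -⟩; exact ne21 h⟩
      obtain ⟨p, t, hT, hc⟩ := hform
      have hred2 : FreeGroup.reduce (flat (((1 : ℕ+), d) :: (j, e) :: L)) = (2, d) :: p :: t := by
        rw [hflat]
        show FreeGroup.reduce (((2 : ℕ+), d) :: flat ((j, e) :: L)) = _
        exact reduce_eq_cons _ hT hc
      exact ⟨fun _ => by rw [hred2]; rfl, fun h => absurd h ne12,
        fun h => absurd h ne12, fun h => absurd rfl h⟩
    by_cases hi2 : i = 2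
    · subst hi2
      have hstep : FreeGroup.reduce (flat (((2 : ℕ+), d) :: (j, e) :: L)) =
          FreeGroup.reduce (((1 : ℕ+), d) :: flat ((j, e) :: L)) := by
        rw [hflat]; rfl
      by_cases hj1 : j = 1
      · subst hj1
        have h1 := Q1 rfl
        rcases hT : FreeGroup.reduce (flat (((1 : ℕ+), e) :: L)) with _ | ⟨p, t⟩
        · rw [hT] at h1; simp at h1
        rw [hT] at h1
        simp only [List.head?_cons, Option.some.injEq] at h1
        subst h1
        have hred2 := reduce_eq_cons ((1 : ℕ+), d) hT (by rintro ⟨h, -⟩; exact ne12 h)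
        rw [← hstep] at hred2
        refine ⟨fun h => absurd h ne21, fun _ hd => ?_, fun _ hd => ?_, fun _ h => absurd rfl h⟩
        · subst hd
          exact ⟨_, hred2, by rintro p hp; simp at hp; subst hp; exact Or.inr rfl⟩
        · subst hd
          exact ⟨(1, true), _, hred2, by simp, ne12⟩
      by_cases hj2 : j = 2
      · subst hj2
        have hde : d = e := by cases d <;> cases e <;> simp_all
        subst hde
        rcases Bool.eq_false_or_eq_true d with hd | hd
        · -- d = e = true
          subst hd
          obtain ⟨p, t, ht, hpne, hp2⟩ := Q3 rfl rfl
          have hcc : ¬(((1 : ℕ+), true).1 = p.1 ∧ ((1 : ℕ+), true).2 = !p.2) := by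
            rintro ⟨h1, h2⟩
            apply hpne
            have hp2f : p.2 = false := by cases hb : p.2 <;> simp_all
            exact Prod.ext h1.symm hp2f
          have hred2 := reduce_eq_cons ((1 : ℕ+), true) ht hcc
          rw [← hstep] at hred2
          refine ⟨fun h => absurd h ne21, fun _ h => absurd h (by simp), fun _ _ => ?_,
            fun _ h => absurd rfl h⟩
          exact ⟨(1, true), _, hred2, by simp, ne12⟩
        · -- d = e = false
          subst hd
          obtain ⟨t, ht, hhd⟩ := Q2 rfl rfl
          have hred2 := reduce_eq_cons ((1 : ℕ+), false) ht (by simp)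
          rw [← hstep] at hred2
          refine ⟨fun h => absurd h ne21, fun _ _ => ?_, fun _ h => absurd h (by simp),
            fun _ h => absurd rfl h⟩
          exact ⟨_, hred2, by rintro p hp; simp at hp; subst hp; exact Or.inl rfl⟩
      · -- j ≥ 3
        obtain ⟨t, ht⟩ := Q4 hj1 hj2
        rcases Bool.eq_false_or_eq_true d with hd | hd
        · subst hd
          have hred2 := reduce_eq_cancel ((1 : ℕ+), true) ht (by simp)
          rw [← hstep] at hred2
          refine ⟨fun h => absurd h ne21, fun _ h => absurd h (by simp), fun _ _ => ?_,
            fun _ h => absurd rfl h⟩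
          refine ⟨(j, e), _, hred2, ?_, hj2⟩
          intro hh
          exact hj1 (congrArg Prod.fst hh)
        · subst hd
          have hred2 := reduce_eq_cons ((1 : ℕ+), false) ht (by simp)
          rw [← hstep] at hred2
          refine ⟨fun h => absurd h ne21, fun _ _ => ?_, fun _ h => absurd h (by simp),
            fun _ h => absurd rfl h⟩
          exact ⟨_, hred2, by rintro p hp; simp at hp; subst hp; exact Or.inl rfl⟩
    · -- i ≥ 3 : f (i,d) = [(1,false),(i,d),(1,true)]
      have hstep : FreeGroup.reduce (flat (((i : ℕ+), d) :: (j, e) :: L)) =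
          FreeGroup.reduce (((1 : ℕ+), false) :: (i, d) :: ((1 : ℕ+), true) :: flat ((j, e) :: L)) := by
        rw [hflat]
        show FreeGroup.reduce (f (i, d) ++ flat ((j, e) :: L)) = _
        simp only [f, if_neg hi1, if_neg hi2]
        rfl
      have main : ∃ t, FreeGroup.reduce (((1 : ℕ+), false) :: (i, d) :: ((1 : ℕ+), true) ::
          flat ((j, e) :: L)) = (1, false) :: (i, d) :: t := by
        by_cases hj1 : j = 1
        · subst hj1
          have h1 := Q1 rfl
          rcases hT : FreeGroup.reduce (flat (((1 : ℕ+), e) :: L)) with _ | ⟨p, t⟩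
          · rw [hT] at h1; simp at h1
          rw [hT] at h1
          simp only [List.head?_cons, Option.some.injEq] at h1
          subst h1
          have s1 := reduce_eq_cons ((1 : ℕ+), true) hT (by rintro ⟨h, -⟩; exact ne12 h)
          have s2 := reduce_eq_cons ((i : ℕ+), d) s1 (by rintro ⟨h, -⟩; exact hi1 h)
          have s3 := reduce_eq_cons ((1 : ℕ+), false) s2 (by rintro ⟨h, -⟩; exact hi1 h.symm)
          exact ⟨_, s3⟩
        by_cases hj2 : j = 2
        · subst hj2
          rcases Bool.eq_false_or_eq_true e with he | he
          · subst he
            obtain ⟨p, t, ht, hpne, hp2⟩ := Q3 rfl rfl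
            have hcc : ¬(((1 : ℕ+), true).1 = p.1 ∧ ((1 : ℕ+), true).2 = !p.2) := by
              rintro ⟨h1, h2⟩
              apply hpne
              have hp2f : p.2 = false := by cases hb : p.2 <;> simp_all
              exact Prod.ext h1.symm hp2f
            have s1 := reduce_eq_cons ((1 : ℕ+), true) ht hcc
            have s2 := reduce_eq_cons ((i : ℕ+), d) s1 (by rintro ⟨h, -⟩; exact hi1 h)
            have s3 := reduce_eq_cons ((1 : ℕ+), false) s2 (by rintro ⟨h, -⟩; exact hi1 h.symm)
            exact ⟨_, s3⟩
          · subst he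
            obtain ⟨t, ht, hhd⟩ := Q2 rfl rfl
            have s1 := reduce_eq_cancel ((1 : ℕ+), true) ht (by simp)
            rcases hT : t with _ | ⟨q, t'⟩
            · rw [hT] at s1
              have s2 := reduce_eq_nil ((i : ℕ+), d) s1
              have s3 := reduce_eq_cons ((1 : ℕ+), false) s2 (by rintro ⟨h, -⟩; exact hi1 h.symm)
              exact ⟨_, s3⟩
            · rw [hT] at s1
              have hq := hhd q (by rw [hT]; rfl)
              have s2 := reduce_eq_cons ((i : ℕ+), d) s1 (by
                rintro ⟨h, -⟩
                rcases hq with h1 | h1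
                · exact hi1 (h.trans h1)
                · exact hi2 (h.trans h1))
              have s3 := reduce_eq_cons ((1 : ℕ+), false) s2 (by rintro ⟨h, -⟩; exact hi1 h.symm)
              exact ⟨_, s3⟩
        · obtain ⟨t, ht⟩ := Q4 hj1 hj2
          have s1 := reduce_eq_cancel ((1 : ℕ+), true) ht (by simp)
          have s2 := reduce_eq_cons ((i : ℕ+), d) s1 (by
            rintro ⟨h1, h2⟩
            exact hr1 ⟨h1, by simpa using h2⟩)
          have s3 := reduce_eq_cons ((1 : ℕ+), false) s2 (by rintro ⟨h, -⟩; exact hi1 h.symm)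
          exact ⟨_, s3⟩
      obtain ⟨t, ht⟩ := main
      rw [← hstep] at ht
      exact ⟨fun h => absurd h hi1, fun h => absurd h hi2, fun h => absurd h hi2,
        fun _ _ => ⟨t, ht⟩⟩

lemma q_head {a : Ltr} {T : List Ltr} (h : Q a T) (ha : a.1 ≠ 1) :
    ∃ p t, T = p :: t ∧ p.1 ≠ 2 := by
  obtain ⟨Q1, Q2, Q3, Q4⟩ := h
  by_cases ha2 : a.1 = 2
  · rcases Bool.eq_false_or_eq_true a.2 with h2 | h2
    · obtain ⟨p, t, ht, -, hp⟩ := Q3 ha2 h2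
      exact ⟨_, _, ht, hp⟩
    · obtain ⟨t, ht, -⟩ := Q2 ha2 h2
      exact ⟨_, _, ht, by decide⟩
  · obtain ⟨t, ht⟩ := Q4 ha ha2
    exact ⟨_, _, ht, by decide⟩

section Sigma

variable (σ : ℕ+ → MulAut F)

lemma sigma_x1 (hσ : IsArtin σ) : σ 1 (x 1) = x 1 * x 2 * (x 1)⁻¹ := by
  have h := (hσ 1).1
  rwa [show (1 + 1 : ℕ+) = 2 from rfl] at h

lemma sigma_x2 (hσ : IsArtin σ) : σ 1 (x 2) = x 1 := by
  have h := (hσ 1).2.1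
  rwa [show (1 + 1 : ℕ+) = 2 from rfl] at h

lemma sigma_other (hσ : IsArtin σ) (j : ℕ+) (h1 : j ≠ 1) (h2 : j ≠ 2) : σ 1 (x j) = x j :=
  (hσ 1).2.2 j h1 (by rwa [show (1 + 1 : ℕ+) = 2 from rfl])

lemma mk_single_true (k : ℕ+) : FreeGroup.mk [(k, true)] = x k := rfl

lemma mk_single_false (k : ℕ+) : FreeGroup.mk [(k, false)] = (x k)⁻¹ := by
  rw [← mk_single_true, FreeGroup.inv_mk]
  simp [FreeGroup.invRev]

lemma rho_single (hσ : IsArtin σ) (a : Ltr) :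
    (x 1)⁻¹ * σ 1 (FreeGroup.mk [a]) * x 1 = FreeGroup.mk (f a) := by
  obtain ⟨i, d⟩ := a
  by_cases hi1 : i = 1
  · subst hi1
    cases d
    · rw [show f (1, false) = [(2, false)] from rfl, mk_single_false, mk_single_false,
        map_inv, sigma_x1 σ hσ]
      group
    · rw [show f (1, true) = [(2, true)] from rfl, mk_single_true, mk_single_true,
        sigma_x1 σ hσ]
      group
  by_cases hi2 : i = 2
  · subst hi2
    cases d
    · rw [show f (2, false) = [(1, false)] from rfl, mk_single_false, mk_single_false,
        map_inv, sigma_x2 σ hσ]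
      group
    · rw [show f (2, true) = [(1, true)] from rfl, mk_single_true, mk_single_true,
        sigma_x2 σ hσ]
      group
  · have hf : f (i, d) = [(1, false), (i, d), (1, true)] := by
      simp only [f, if_neg hi1, if_neg hi2]
    rw [hf, show FreeGroup.mk [((1:ℕ+), false), (i, d), ((1:ℕ+), true)] =
      FreeGroup.mk [((1:ℕ+), false)] * FreeGroup.mk [(i, d)] * FreeGroup.mk [((1:ℕ+), true)] by
        rw [FreeGroup.mul_mk, FreeGroup.mul_mk]; rfl, mk_single_false, mk_single_true]
    cases d
    · rw [mk_single_false, map_inv, sigma_other σ hσ i hi1 hi2]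
    · rw [mk_single_true, sigma_other σ hσ i hi1 hi2]

lemma rho_mk (hσ : IsArtin σ) : ∀ M : List Ltr,
    (x 1)⁻¹ * σ 1 (FreeGroup.mk M) * x 1 = FreeGroup.mk (flat M) := by
  intro M
  induction M with
  | nil =>
    rw [show FreeGroup.mk ([] : List Ltr) = 1 from (FreeGroup.one_eq_mk).symm, map_one]
    rw [show flat [] = [] from rfl, ← FreeGroup.one_eq_mk]
    group
  | cons a M ih =>
    have h1 : FreeGroup.mk (a :: M) = FreeGroup.mk [a] * FreeGroup.mk M := by
      rw [FreeGroup.mul_mk]; rfl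
    have h2 : FreeGroup.mk (flat (a :: M)) = FreeGroup.mk (f a) * FreeGroup.mk (flat M) := by
      rw [FreeGroup.mul_mk]; rfl
    rw [h1, map_mul, h2, ← rho_single σ hσ a, ← ih]
    group

lemma key (hσ : IsArtin σ) (u : F) (h0 : u.toWord ≠ []) (h1 : ∀ p ∈ u.toWord.head?, p.1 ≠ 1)
    (h2 : ∀ p ∈ u.toWord.getLast?, p.1 ≠ 1) :
    ∃ t, (x 2 * ((x 1)⁻¹ * σ 1 u * x 1) * (x 2)⁻¹).toWord = (2, true) :: t := by
  rcases hL : u.toWord with _ | ⟨a, L0⟩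
  · exact absurd hL h0
  have hMeq : a :: (L0 ++ [((1:ℕ+), false)]) = (a :: L0) ++ [((1:ℕ+), false)] := rfl
  have hredM : IsRed (a :: (L0 ++ [((1:ℕ+), false)])) := by
    rw [hMeq]
    apply List.isChain_append.2
    refine ⟨?_, List.isChain_singleton _, ?_⟩
    · have h := isRed_reduce u.toWord
      rwa [FreeGroup.reduce_toWord, hL] at h
    · intro p hp q hq
      simp only [List.head?_cons, Option.mem_def, Option.some.injEq] at hq
      subst hq
      have hp1 : p.1 ≠ 1 := h2 p (by rw [hL]; exact hp)
      exact fun hc => hp1 hc.1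
  have hu : u * (x 1)⁻¹ = FreeGroup.mk (a :: (L0 ++ [((1:ℕ+), false)])) := by
    conv_lhs => rw [← FreeGroup.mk_toWord (x := u), hL]
    rw [← mk_single_false, FreeGroup.mul_mk, hMeq]
  have hrho := rho_mk σ hσ (a :: (L0 ++ [((1:ℕ+), false)]))
  rw [← hu, map_mul, map_inv, sigma_x1 σ hσ] at hrho
  have hmk : x 2 * ((x 1)⁻¹ * σ 1 u * x 1) * (x 2)⁻¹ =
      FreeGroup.mk ((2, true) :: flat (a :: (L0 ++ [((1:ℕ+), false)]))) := by
    have h2t : FreeGroup.mk (((2:ℕ+), true) :: flat (a :: (L0 ++ [((1:ℕ+), false)]))) =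
        x 2 * FreeGroup.mk (flat (a :: (L0 ++ [((1:ℕ+), false)]))) := by
      rw [← mk_single_true, FreeGroup.mul_mk]; rfl
    rw [h2t, ← hrho]
    group
  have hQ := phi (L0 ++ [((1:ℕ+), false)]) a hredM
  have ha1 : a.1 ≠ 1 := h1 a (by rw [hL]; rfl)
  obtain ⟨p, t, hpt, hp2⟩ := q_head hQ ha1
  refine ⟨p :: t, ?_⟩
  rw [hmk, FreeGroup.toWord_mk]
  exact reduce_eq_cons _ hpt (fun hc => hp2 hc.1.symm)

end Sigma

lemma head?_invRev (L : List Ltr) :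
    (FreeGroup.invRev L).head? = L.getLast?.map (fun p => (p.1, !p.2)) := by
  simp [FreeGroup.invRev, List.head?_reverse, List.getLast?_map]

end Stmt5Aux

theorem stmt5 (σ : ℕ+ → MulAut F) (hσ : IsArtin σ) (w : F) (hw : w ∈ W) :
    ∃ w' ∈ W, σ 1 (x 1 * w * (x 1)⁻¹) = x 1 * w' * (x 1)⁻¹ := by
  obtain ⟨hw1, hw2, hw3⟩ := hw
  have h0 : w.toWord ≠ [] := fun h => hw1 (FreeGroup.toWord_eq_nil_iff.1 h)
  obtain ⟨t, ht⟩ := Stmt5Aux.key σ hσ w h0 hw2 hw3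
  have hinvW : (w⁻¹).toWord = FreeGroup.invRev w.toWord := FreeGroup.toWord_inv w
  have h0' : (w⁻¹).toWord ≠ [] := by
    rw [hinvW]
    intro h
    apply h0
    have h' := congrArg FreeGroup.invRev h
    rwa [FreeGroup.invRev_invRev, FreeGroup.invRev_empty] at h'
  have hhead' : ∀ p ∈ (w⁻¹).toWord.head?, p.1 ≠ 1 := by
    intro p hp
    rw [hinvW, Stmt5Aux.head?_invRev] at hp
    rw [Option.mem_def, Option.map_eq_some_iff] at hp
    obtain ⟨q, hq, hqp⟩ := hp
    have := hw3 q hq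
    rw [← hqp]
    exact this
  have hlast' : ∀ p ∈ (w⁻¹).toWord.getLast?, p.1 ≠ 1 := by
    intro p hp
    have hww : w = (w⁻¹)⁻¹ := by group
    have : w.toWord.head? = ((w⁻¹).toWord.getLast?).map (fun p => (p.1, !p.2)) := by
      conv_lhs => rw [hww]
      rw [FreeGroup.toWord_inv, Stmt5Aux.head?_invRev]
    rw [Option.mem_def] at hp
    have hh : w.toWord.head? = some (p.1, !p.2) := by rw [this, hp]; rfl
    exact hw2 (p.1, !p.2) hh
  obtain ⟨t', ht'⟩ := Stmt5Aux.key σ hσ w⁻¹ h0' hhead' hlast'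
  set w' : F := x 2 * ((x 1)⁻¹ * σ 1 w * x 1) * (x 2)⁻¹ with hw'
  have hw'inv : w'⁻¹ = x 2 * ((x 1)⁻¹ * σ 1 w⁻¹ * x 1) * (x 2)⁻¹ := by
    rw [hw', map_inv]
    group
  refine ⟨w', ⟨?_, ?_, ?_⟩, ?_⟩
  · intro h
    have h1 : (1 : F).toWord = (2, true) :: t := by rw [← h]; exact ht
    rw [FreeGroup.toWord_one] at h1
    cases h1
  · intro p hp
    rw [ht] at hp
    rw [Option.mem_def, List.head?_cons, Option.some.injEq] at hp
    subst hp
    decide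
  · intro p hp
    have h1 : (w'⁻¹).toWord = (2, true) :: t' := by rw [hw'inv]; exact ht'
    have h2 : (w'⁻¹).toWord.head? = (w'.toWord.getLast?).map (fun p => (p.1, !p.2)) := by
      rw [FreeGroup.toWord_inv, Stmt5Aux.head?_invRev]
    rw [h1] at h2
    rw [Option.mem_def] at hp
    rw [hp] at h2
    simp only [List.head?_cons, Option.map_some] at h2
    have : p.1 = 2 := by
      have := (Option.some.injEq _ _).mp h2.symm
      exact (congrArg Prod.fst this)
    rw [this]
    decide
  · rw [map_mul, map_mul, map_inv, Stmt5Aux.sigma_x1 σ hσ, hw']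
    group
end

section
/- Let β be an element of the group B of automorphisms of F generated by {σ_1, σ_2, …} that can be written as a word in the generators σ_i using at least one occurrence of σ_1 and no occurrence of σ_1^{-1} (occurrences of σ_i^{±1} for i ≥ 2 are allowed). Then β(x_1) ≠ x_1; in particular β ≠ 1. -/
namespace Stmt7Aux

open List FreeGroup

abbrev Ltr := ℕ+ × Bool

/-- The "no cancellation" relation on adjacent letters. -/
def R (a b : Ltr) : Prop := ¬(a.1 = b.1 ∧ a.2 = !b.2)

lemma reduce_eq_self {L : List Ltr} (h : List.Chain' R L) : FreeGroup.reduce L = L := by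
  induction L with
  | nil => rfl
  | cons a t ih =>
    have ht := ih h.tail
    rw [FreeGroup.reduce.cons, ht]
    cases t with
    | nil => rfl
    | cons b t2 =>
      have hab : R a b := (List.isChain_cons_cons.mp h).1
      change (if a.1 = b.1 ∧ a.2 = !b.2 then t2 else a :: b :: t2) = a :: b :: t2
      rw [if_neg hab]

lemma chain'_of_reduce {L : List Ltr} (h : FreeGroup.reduce L = L) : List.Chain' R L := by
  induction L with
  | nil => exact List.isChain_nil
  | cons a t ih =>
    rw [FreeGroup.reduce.cons] at h
    cases hr : FreeGroup.reduce t with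
    | nil =>
      rw [hr] at h
      have : t = [] := by
        have := (List.cons.injEq a [] a t).mp h
        exact this.2.symm
      subst this
      exact List.isChain_singleton a
    | cons b t2 =>
      rw [hr] at h
      change (if a.1 = b.1 ∧ a.2 = !b.2 then t2 else a :: b :: t2) = a :: t at h
      by_cases hc : a.1 = b.1 ∧ a.2 = !b.2
      · rw [if_pos hc] at h
        have h1 : (FreeGroup.reduce t).length ≤ t.length :=
          FreeGroup.Red.length_le FreeGroup.reduce.red
        rw [hr] at h1
        rw [h] at h1
        simp at h1
      · rw [if_neg hc] at h
        have h2 : b :: t2 = t := ((List.cons.injEq a (b :: t2) a t).mp h).2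
        have ht : List.Chain' R t := ih (by rw [hr, h2])
        rw [← h2] at ht ⊢
        exact List.isChain_cons_cons.mpr ⟨hc, ht⟩

lemma chain'_toWord (g : F) : List.Chain' R g.toWord :=
  chain'_of_reduce (FreeGroup.reduce_toWord g)

lemma toWord_mk_eq {L : List Ltr} (h : List.Chain' R L) :
    (FreeGroup.mk L).toWord = L := by
  rw [FreeGroup.toWord_mk, reduce_eq_self h]


lemma head?_dropWhile_not' {α : Type*} (p : α → Bool) (l : List α) :
    ∀ q ∈ (l.dropWhile p).head?, p q = false := by
  have h := List.head?_dropWhile_not p l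
  intro q hq
  cases hh : (l.dropWhile p).head? with
  | none => rw [hh] at hq; exact absurd hq (by simp)
  | some r =>
    rw [hh] at h hq
    have h3 : r = q := by simpa using hq
    subst h3
    exact h

/-- `g` avoids the index `c` : no letter of its reduced word has index `c`. -/
def Avoid (c : ℕ+) (g : F) : Prop := ∀ p ∈ g.toWord, p.1 ≠ c

/-- Nontrivial elements whose reduced word neither begins nor ends with index `c`. -/
def Wc (c : ℕ+) : Set F :=
  {w | w ≠ 1 ∧ (∀ p ∈ w.toWord.head?, p.1 ≠ c) ∧ (∀ p ∈ w.toWord.getLast?, p.1 ≠ c)}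

lemma avoid_one (c : ℕ+) : Avoid c 1 := by
  intro p hp
  rw [FreeGroup.toWord_one] at hp
  exact absurd hp List.not_mem_nil

lemma avoid_mul {c : ℕ+} {a b : F} (ha : Avoid c a) (hb : Avoid c b) :
    Avoid c (a * b) := by
  intro p hp
  have := (FreeGroup.toWord_mul_sublist a b).subset hp
  rcases List.mem_append.mp this with h | h
  · exact ha p h
  · exact hb p h

lemma avoid_inv {c : ℕ+} {a : F} (ha : Avoid c a) : Avoid c a⁻¹ := by
  intro p hp
  rw [FreeGroup.toWord_inv] at hp
  simp only [FreeGroup.invRev, List.mem_reverse, List.mem_map] at hp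
  obtain ⟨q, hq, rfl⟩ := hp
  exact ha q hq

lemma avoid_x {c j : ℕ+} (h : j ≠ c) : Avoid c (x j) := by
  intro p hp
  rw [show (x j).toWord = [(j, true)] from FreeGroup.toWord_of j] at hp
  rw [List.mem_singleton] at hp
  subst hp
  exact h

lemma avoid_wc {c : ℕ+} {g : F} (ha : Avoid c g) (hg : g ≠ 1) : g ∈ Wc c :=
  ⟨hg, fun p hp => ha p (List.mem_of_mem_head? hp),
    fun p hp => ha p (List.mem_of_mem_getLast? hp)⟩

lemma mk_true (j : ℕ+) : FreeGroup.mk [(j, true)] = x j := rfl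

lemma mk_false (j : ℕ+) : FreeGroup.mk [(j, false)] = (x j)⁻¹ := by
  have h : FreeGroup.invRev [(j, true)] = [(j, false)] := by
    simp [FreeGroup.invRev]
  rw [← mk_true j, FreeGroup.inv_mk, h]

lemma mk_cons (p : Ltr) (t : List Ltr) :
    FreeGroup.mk (p :: t) = FreeGroup.mk [p] * FreeGroup.mk t := by
  rw [FreeGroup.mul_mk]
  rfl

lemma avoidHom (φ : F ≃* F) (c d : ℕ+) (h1 : ∀ j, j ≠ c → Avoid d (φ (x j))) :
    ∀ L : List Ltr, (∀ p ∈ L, p.1 ≠ c) → Avoid d (φ (FreeGroup.mk L)) := by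
  intro L
  induction L with
  | nil =>
    intro _
    have : FreeGroup.mk ([] : List Ltr) = 1 := rfl
    rw [this, _root_.map_one]
    exact avoid_one d
  | cons p t ih =>
    intro hmem
    rw [mk_cons, _root_.map_mul]
    refine avoid_mul ?_ (ih fun q hq => hmem q (List.mem_cons_of_mem p hq))
    have hp1 : p.1 ≠ c := hmem p (List.mem_cons_self)
    rcases p with ⟨j, b⟩
    cases b
    · rw [mk_false, _root_.map_inv]
      exact avoid_inv (h1 j hp1)
    · rw [mk_true]
      exact h1 j hp1

lemma avoidHom' (φ : F ≃* F) (c d : ℕ+) (h1 : ∀ j, j ≠ c → Avoid d (φ (x j)))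
    {g : F} (hg : Avoid c g) : Avoid d (φ g) := by
  have := avoidHom φ c d h1 g.toWord hg
  rwa [FreeGroup.mk_toWord] at this

lemma blockMap (φ : F ≃* F) (c d : ℕ+) (h3 : φ (x c) = x d) :
    ∀ L : List Ltr, (∀ p ∈ L, p.1 = c) →
      φ (FreeGroup.mk L) = FreeGroup.mk (L.map fun p => (d, p.2)) := by
  intro L
  induction L with
  | nil =>
    intro _
    simp only [List.map_nil]
    rw [show FreeGroup.mk ([] : List Ltr) = (1 : F) from rfl, _root_.map_one]
  | cons p t ih =>
    intro hmem
    have hp1 : p.1 = c := hmem p (List.mem_cons_self)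
    have hletter : φ (FreeGroup.mk [p]) = FreeGroup.mk [(d, p.2)] := by
      rcases p with ⟨j, b⟩
      simp only at hp1
      subst hp1
      cases b
      · rw [mk_false, _root_.map_inv, h3]
        exact (mk_false d).symm
      · rw [mk_true, h3]
        exact (mk_true d).symm
    rw [mk_cons, _root_.map_mul, ih (fun q hq => hmem q (List.mem_cons_of_mem p hq)),
      hletter, ← mk_cons]
    rfl

lemma chain_block (c d : ℕ+) :
    ∀ L : List Ltr, (∀ p ∈ L, p.1 = c) → List.Chain' R L →
      List.Chain' R (L.map fun p => (d, p.2)) := by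
  intro L
  induction L with
  | nil => intro _ _; exact List.isChain_nil
  | cons a t ih =>
    intro hmem hc
    cases t with
    | nil => exact List.isChain_singleton _
    | cons b t2 =>
      change List.IsChain R _
      rw [List.map_cons, List.map_cons, List.isChain_cons_cons]
      constructor
      · have hab : R a b := (List.isChain_cons_cons.mp hc).1
        have ha : a.1 = c := hmem a (List.mem_cons_self)
        have hb : b.1 = c := hmem b (List.mem_cons_of_mem _ (List.mem_cons_self))
        intro ⟨_, h2⟩
        exact hab ⟨ha.trans hb.symm, h2⟩
      · exact ih (fun q hq => hmem q (List.mem_cons_of_mem a hq)) (List.isChain_cons_cons.mp hc).2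

/-- The main lemma: a `MulAut` carrying the `c`-avoiding elements to `d`-avoiding
elements and `x c` to `x d` maps `Wc c` into `Wc d`. -/
lemma main (φ : F ≃* F) (c d : ℕ+)
    (h1 : ∀ j, j ≠ c → Avoid d (φ (x j)))
    (h3 : φ (x c) = x d) :
    ∀ w : F, w ∈ Wc c → φ w ∈ Wc d := by
  suffices H : ∀ n : ℕ, ∀ w : F, w.toWord.length ≤ n → w ∈ Wc c → φ w ∈ Wc d by
    exact fun w hw => H w.toWord.length w le_rfl hw
  intro n
  induction n with
  | zero =>
    intro w hl hw
    exact absurd (FreeGroup.toWord_eq_nil_iff.mp (List.length_eq_zero_iff.mp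
      (Nat.le_zero.mp hl))) hw.1
  | succ n ih =>
    intro w hl hw
    obtain ⟨hw1, hwh, hwl⟩ := hw
    have hφw1 : φ w ≠ 1 := fun h => hw1 (φ.injective (by rw [h, _root_.map_one]))
    by_cases hA : Avoid c w
    · exact avoid_wc (avoidHom' φ c d h1 hA) hφw1
    · obtain ⟨L, hLdef⟩ : ∃ L, w.toWord = L := ⟨_, rfl⟩
      have hLne : L ≠ [] := fun h =>
        hw1 (FreeGroup.toWord_eq_nil_iff.mp (hLdef.trans h))
      have hred : List.Chain' R L := hLdef ▸ chain'_toWord w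
      have hwh' : ∀ p ∈ L.head?, p.1 ≠ c := by rw [← hLdef]; exact hwh
      have hwl' : ∀ p ∈ L.getLast?, p.1 ≠ c := by rw [← hLdef]; exact hwl
      have hl' : L.length ≤ n + 1 := by rw [← hLdef]; exact hl
      have hwmk : w = FreeGroup.mk L := by rw [← hLdef, FreeGroup.mk_toWord]
      have hex : ∃ p ∈ L, p.1 = c := by
        unfold Avoid at hA
        rw [hLdef] at hA
        push_neg at hA
        exact hA
      set P : Ltr → Bool := fun p => !decide (p.1 = c) with hP
      set Q : Ltr → Bool := fun p => decide (p.1 = c) with hQ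
      obtain ⟨L₀, hL₀⟩ : ∃ L₀, L.takeWhile P = L₀ := ⟨_, rfl⟩
      obtain ⟨L', hL'⟩ : ∃ L', L.dropWhile P = L' := ⟨_, rfl⟩
      obtain ⟨block, hblock⟩ : ∃ bl, L'.takeWhile Q = bl := ⟨_, rfl⟩
      obtain ⟨L₁, hL₁⟩ : ∃ L₁, L'.dropWhile Q = L₁ := ⟨_, rfl⟩
      have hsplit1 : L₀ ++ L' = L := by
        rw [← hL₀, ← hL']; exact List.takeWhile_append_dropWhile
      have hsplit2 : block ++ L₁ = L' := by
        rw [← hblock, ← hL₁]; exact List.takeWhile_append_dropWhile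
      -- L' is nonempty
      have hL'ne : L' ≠ [] := by
        intro h
        obtain ⟨q, hqL, hqc⟩ := hex
        have hq0 : q ∈ L₀ := by rw [← hsplit1, h, List.append_nil] at hqL; exact hqL
        have := List.mem_takeWhile_imp (hL₀ ▸ hq0)
        rw [hP] at this
        simp only [Bool.not_eq_true', decide_eq_false_iff_not] at this
        exact this hqc
      -- every letter of L₀ has index ≠ c
      have hmemL₀ : ∀ p ∈ L₀, p.1 ≠ c := by
        intro p hp
        have := List.mem_takeWhile_imp (hL₀ ▸ hp)
        rw [hP] at this
        simpa using this
      -- every letter of block has index = c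
      have hmemblock : ∀ p ∈ block, p.1 = c := by
        intro p hp
        have := List.mem_takeWhile_imp (hblock ▸ hp)
        rw [hQ] at this
        simpa using this
      -- head of L' has index = c
      have hheadL' : ∀ q ∈ L'.head?, q.1 = c := by
        have h2 := head?_dropWhile_not' P L
        rw [hL'] at h2
        intro q hq
        have := h2 q hq
        rw [hP] at this
        simp only [Bool.not_eq_false', decide_eq_true_eq] at this
        exact this
      -- L₀ is nonempty
      have hL₀ne : L₀ ≠ [] := by
        intro h
        have hLL' : L = L' := by rw [← hsplit1, h, List.nil_append]
        obtain ⟨a, ha⟩ : ∃ a, L.head? = some a := by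
          cases L with
          | nil => exact absurd rfl hLne
          | cons a t => exact ⟨a, rfl⟩
        have ha' : a ∈ L'.head? := by rw [← hLL']; exact ha
        exact hwh' a ha (hheadL' a ha')
      -- block is nonempty
      have hblockne : block ≠ [] := by
        intro hbnil
        cases hL'c : L' with
        | nil => exact hL'ne hL'c
        | cons a t =>
          have ha : a ∈ L'.head? := by rw [hL'c]; rfl
          have haQ : Q a = true := by rw [hQ]; simpa using hheadL' a ha
          have hbl : block = a :: t.takeWhile Q := by
            rw [← hblock, hL'c]
            simp [List.takeWhile_cons, haQ]
          rw [hbl] at hbnil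
          exact List.cons_ne_nil a _ hbnil
      -- L₁ is nonempty
      have hL₁ne : L₁ ≠ [] := by
        intro h
        have hall : ∀ p ∈ L', Q p = true := by
          intro p hp
          exact List.dropWhile_eq_nil_iff.mp (hL₁.trans h) p hp
        have hlast : L.getLast? = L'.getLast? := by
          rw [← hsplit1]; exact List.getLast?_append_of_ne_nil L₀ hL'ne
        have hgl : L'.getLast? = some (L'.getLast hL'ne) := List.getLast?_eq_getLast hL'ne
        have hmem : L'.getLast hL'ne ∈ L' := List.getLast_mem hL'ne
        have hq : Q (L'.getLast hL'ne) = true := hall _ hmem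
        have hne : (L'.getLast hL'ne).1 ≠ c := hwl' _ (by rw [hlast, hgl]; rfl)
        rw [hQ] at hq
        simp only [decide_eq_true_eq] at hq
        exact hne hq
      -- head of L₁ has index ≠ c
      have hheadL₁ : ∀ p ∈ L₁.head?, p.1 ≠ c := by
        have h2 := head?_dropWhile_not' Q L'
        rw [hL₁] at h2
        intro p hp
        have := h2 p hp
        rw [hQ] at this
        simp only [decide_eq_false_iff_not] at this
        exact this
      -- last of L₁ has index ≠ c
      have hlastL₁ : ∀ p ∈ L₁.getLast?, p.1 ≠ c := by
        have e1 : L'.getLast? = L₁.getLast? := by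
          rw [← hsplit2]; exact List.getLast?_append_of_ne_nil block hL₁ne
        have e2 : L.getLast? = L'.getLast? := by
          rw [← hsplit1]; exact List.getLast?_append_of_ne_nil L₀ hL'ne
        intro p hp
        exact hwl' p (by rw [e2, e1]; exact hp)
      -- chains
      have hcL₀ : List.Chain' R L₀ := hred.prefix (hL₀ ▸ List.takeWhile_prefix P)
      have hcL' : List.Chain' R L' := hred.suffix (hL' ▸ List.dropWhile_suffix P)
      have hcblock : List.Chain' R block := hcL'.prefix (hblock ▸ List.takeWhile_prefix Q)
      have hcL₁ : List.Chain' R L₁ := hcL'.suffix (hL₁ ▸ List.dropWhile_suffix Q)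
      -- the tail element
      have htw₁ : (FreeGroup.mk L₁).toWord = L₁ := toWord_mk_eq hcL₁
      have hw₁ : FreeGroup.mk L₁ ∈ Wc c := by
        refine ⟨?_, ?_, ?_⟩
        · intro h; exact hL₁ne (by rw [← htw₁, h, FreeGroup.toWord_one])
        · rw [htw₁]; exact hheadL₁
        · rw [htw₁]; exact hlastL₁
      have hlen : L₁.length ≤ n := by
        have hsum : L.length = L₀.length + (block.length + L₁.length) := by
          rw [← hsplit1, ← hsplit2]; simp [List.length_append]
        have h₀ : 1 ≤ L₀.length := List.length_pos_iff.mpr hL₀ne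
        have hb : 1 ≤ block.length := List.length_pos_iff.mpr hblockne
        omega
      have hφw₁ := ih (FreeGroup.mk L₁) (by rw [htw₁]; exact hlen) hw₁
      obtain ⟨hM1, hMh, hMl⟩ := hφw₁
      obtain ⟨M, hMdef⟩ : ∃ M, (φ (FreeGroup.mk L₁)).toWord = M := ⟨_, rfl⟩
      rw [hMdef] at hMh hMl
      have hMne : M ≠ [] := fun h =>
        hM1 (FreeGroup.toWord_eq_nil_iff.mp (hMdef.trans h))
      have hcM : List.Chain' R M := hMdef ▸ chain'_toWord _
      -- the head element
      have hAavoid : Avoid d (φ (FreeGroup.mk L₀)) := avoidHom φ c d h1 L₀ hmemL₀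
      have hAne : φ (FreeGroup.mk L₀) ≠ 1 := by
        intro h
        have hmk : FreeGroup.mk L₀ = 1 := φ.injective (by rw [h, _root_.map_one])
        exact hL₀ne (by rw [← toWord_mk_eq hcL₀, hmk, FreeGroup.toWord_one])
      obtain ⟨K, hKdef⟩ : ∃ K, (φ (FreeGroup.mk L₀)).toWord = K := ⟨_, rfl⟩
      have hKne : K ≠ [] := fun h =>
        hAne (FreeGroup.toWord_eq_nil_iff.mp (hKdef.trans h))
      have hKavoid : ∀ p ∈ K, p.1 ≠ d := fun p hp => hAavoid p (hKdef ▸ hp)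
      have hcK : List.Chain' R K := hKdef ▸ chain'_toWord _
      -- the block
      have hφblock : φ (FreeGroup.mk block) =
          FreeGroup.mk (block.map fun p => (d, p.2)) :=
        blockMap φ c d h3 block hmemblock
      obtain ⟨D, hDdef⟩ : ∃ D, block.map (fun p : Ltr => (d, p.2)) = D := ⟨_, rfl⟩
      rw [hDdef] at hφblock
      have hcD : List.Chain' R D := hDdef ▸ chain_block c d block hmemblock hcblock
      have hmemD : ∀ p ∈ D, p.1 = d := by
        intro p hp
        rw [← hDdef, List.mem_map] at hp
        obtain ⟨q, _, rfl⟩ := hp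
        rfl
      have hDne : D ≠ [] := by
        rw [← hDdef]
        intro h
        exact hblockne (List.map_eq_nil_iff.mp h)
      -- the decomposition of φ w
      have hφw : φ w = FreeGroup.mk (K ++ (D ++ M)) := by
        have hw' : w = FreeGroup.mk L₀ * (FreeGroup.mk block * FreeGroup.mk L₁) := by
          rw [FreeGroup.mul_mk, FreeGroup.mul_mk, hsplit2, hsplit1]
          exact hwmk
        rw [hw', _root_.map_mul, _root_.map_mul, hφblock,
          show φ (FreeGroup.mk L₀) = FreeGroup.mk K by
            rw [← hKdef, FreeGroup.mk_toWord],
          show φ (FreeGroup.mk L₁) = FreeGroup.mk M by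
            rw [← hMdef, FreeGroup.mk_toWord],
          FreeGroup.mul_mk, FreeGroup.mul_mk]
      have hbig : List.Chain' R (K ++ (D ++ M)) := by
        change List.IsChain R _
        rw [List.isChain_append]
        refine ⟨hcK, ?_, ?_⟩
        · rw [List.isChain_append]
          refine ⟨hcD, hcM, ?_⟩
          intro p hp q hq
          have hpd : p.1 = d := hmemD p (List.mem_of_mem_getLast? hp)
          have hqd : q.1 ≠ d := hMh q hq
          rintro ⟨h1', _⟩
          exact hqd (h1' ▸ hpd)
        · intro p hp q hq
          have hpK : p.1 ≠ d := hKavoid p (List.mem_of_mem_getLast? hp)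
          rw [List.head?_append_of_ne_nil D hDne] at hq
          have hqd : q.1 = d := hmemD q (List.mem_of_mem_head? hq)
          rintro ⟨h1', _⟩
          exact hpK (h1'.trans hqd)
      have htoW : (φ w).toWord = K ++ (D ++ M) := by
        rw [hφw, toWord_mk_eq hbig]
      refine ⟨hφw1, ?_, ?_⟩
      · rw [htoW, List.head?_append_of_ne_nil K hKne]
        intro p hp
        exact hKavoid p (List.mem_of_mem_head? hp)
      · rw [htoW, List.getLast?_append_of_ne_nil K
            (fun h => hMne (List.append_eq_nil_iff.mp h).2),
          List.getLast?_append_of_ne_nil D hMne]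
        exact hMl

lemma sandwich {e c : ℕ+} (hec : e ≠ c) {v : F} (hv : v ∈ Wc e) :
    x e * v * (x e)⁻¹ ∈ Wc c := by
  obtain ⟨hv1, hvh, hvl⟩ := hv
  set M := v.toWord with hM
  have hMne : M ≠ [] := fun h => hv1 (FreeGroup.toWord_eq_nil_iff.mp h)
  have hcM : List.Chain' R M := chain'_toWord v
  have hbig : List.Chain' R (((e, true) :: M) ++ [(e, false)]) := by
    change List.IsChain R _
    rw [List.isChain_append]
    refine ⟨?_, List.isChain_singleton _, ?_⟩
    · rw [List.isChain_cons]
      refine ⟨?_, hcM⟩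
      intro q hq
      have hqe : q.1 ≠ e := hvh q hq
      rintro ⟨h1', _⟩
      exact hqe h1'.symm
    · intro p hp q hq
      have hgl : ((e, true) :: M).getLast? = M.getLast? := by
        rw [show (e, true) :: M = [(e, true)] ++ M from rfl]
        exact List.getLast?_append_of_ne_nil _ hMne
      rw [hgl] at hp
      have hpne : p.1 ≠ e := hvl p hp
      have hqe : (e, false) = q := by simpa using hq
      subst hqe
      rintro ⟨h1', _⟩
      exact hpne h1'
  have heq : x e * v * (x e)⁻¹ = FreeGroup.mk (((e, true) :: M) ++ [(e, false)]) := by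
    rw [← mk_false e, ← mk_true e, show v = FreeGroup.mk M from FreeGroup.mk_toWord.symm,
      FreeGroup.mul_mk, FreeGroup.mul_mk]
    rfl
  have htw : (x e * v * (x e)⁻¹).toWord = ((e, true) :: M) ++ [(e, false)] := by
    rw [heq, toWord_mk_eq hbig]
  refine ⟨?_, ?_, ?_⟩
  · intro h
    rw [← FreeGroup.toWord_eq_nil_iff, htw] at h
    simp at h
  · rw [htw]
    intro p hp
    have h3 : (e, true) = p := by simpa using hp
    subst h3
    exact hec
  · rw [htw, List.getLast?_append_of_ne_nil _ (by simp : [(e, false)] ≠ [])]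
    intro p hp
    have h3 : (e, false) = p := by simpa using hp
    subst h3
    exact hec

end Stmt7Aux

open Stmt7Aux
theorem stmt7 (σ : ℕ+ → MulAut F) (hσ : IsArtin σ) (β : MulAut F)
    (hβ : ∃ l : List (ℕ+ × Bool),
      β = (l.map fun p => if p.2 then σ p.1 else (σ p.1)⁻¹).prod ∧
      (1, true) ∈ l ∧ (1, false) ∉ l) :
    β (x 1) ≠ x 1 ∧ β ≠ 1 := by
  obtain ⟨l, hβl, hmem1, hnmem⟩ := hβ
  have s1 : ∀ i, σ i (x i) = x i * x (i + 1) * (x i)⁻¹ := fun i => (hσ i).1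
  have s2 : ∀ i, σ i (x (i + 1)) = x i := fun i => (hσ i).2.1
  have s3 : ∀ i j, j ≠ i → j ≠ i + 1 → σ i (x j) = x j := fun i => (hσ i).2.2
  have two_eq : (2 : ℕ+) = 1 + 1 := rfl
  have succ_ne_one : ∀ i : ℕ+, i + 1 ≠ 1 := by
    intro i h
    have h2 := congrArg (fun t : ℕ+ => (t : ℕ)) h
    simp only [PNat.add_coe, PNat.one_coe] at h2
    have := i.pos
    omega
  have one_ne_two : (1 : ℕ+) ≠ 2 := by decide
  have two_ne_one : (2 : ℕ+) ≠ 1 := by decide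
  -- the auxiliary automorphism τ = conj (x 1)⁻¹ ∘ σ 1
  set φB : MulAut F := MulAut.conj ((x 1)⁻¹) * σ 1 with hφB
  have hφBapp : ∀ g, φB g = (x 1)⁻¹ * (σ 1) g * x 1 := by
    intro g
    rw [hφB, MulAut.mul_apply, MulAut.conj_apply, inv_inv]
  have hσ1x1 : σ 1 (x 1) = x 1 * x 2 * (x 1)⁻¹ := by rw [two_eq]; exact s1 1
  have hσ1x2 : σ 1 (x 2) = x 1 := by rw [two_eq]; exact s2 1
  have hφBx1 : φB (x 1) = x 2 := by rw [hφBapp, hσ1x1]; group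
  have hφBh1 : ∀ j, j ≠ 1 → Avoid 2 (φB (x j)) := by
    intro j hj
    by_cases hj2 : j = 2
    · subst hj2
      rw [hφBapp, hσ1x2]
      have he : (x 1)⁻¹ * x 1 * x 1 = x 1 := by group
      rw [he]
      exact avoid_x one_ne_two
    · rw [hφBapp, s3 1 j hj (by rw [← two_eq]; exact hj2)]
      exact avoid_mul (avoid_mul (avoid_inv (avoid_x one_ne_two)) (avoid_x hj2))
        (avoid_x one_ne_two)
  have stepB : ∀ w ∈ Wc 1, φB w ∈ Wc 2 := Stmt7Aux.main φB 1 2 hφBh1 hφBx1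
  -- σ i preserves Wc 1 for i ≠ 1
  have stepCpos : ∀ i, i ≠ 1 → ∀ w ∈ Wc 1, (σ i) w ∈ Wc 1 := by
    intro i hi
    refine Stmt7Aux.main (σ i) 1 1 ?_ ?_
    · intro j hj
      by_cases hji : j = i
      · subst hji
        rw [s1 j]
        exact avoid_mul (avoid_mul (avoid_x hi) (avoid_x (succ_ne_one j)))
          (avoid_inv (avoid_x hi))
      · by_cases hji1 : j = i + 1
        · subst hji1
          rw [s2 i]
          exact avoid_x hi
        · rw [s3 i j hji hji1]
          exact avoid_x hj
    · exact s3 i 1 (fun h => hi h.symm) (fun h => succ_ne_one i h.symm)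
  -- values of (σ i)⁻¹
  have t1 : ∀ i, (σ i)⁻¹ (x i) = x (i + 1) := by
    intro i
    conv_lhs => rw [← s2 i]
    apply MulAut.inv_apply_self
  have t2 : ∀ i, (σ i)⁻¹ (x (i + 1)) = (x (i + 1))⁻¹ * x i * x (i + 1) := by
    intro i
    have h : σ i ((x (i + 1))⁻¹ * x i * x (i + 1)) = x (i + 1) := by
      rw [_root_.map_mul, _root_.map_mul, _root_.map_inv, s1 i, s2 i]
      group
    conv_lhs => rw [← h]
    apply MulAut.inv_apply_self
  have t3 : ∀ i j, j ≠ i → j ≠ i + 1 → (σ i)⁻¹ (x j) = x j := by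
    intro i j h h'
    conv_lhs => rw [← s3 i j h h']
    apply MulAut.inv_apply_self
  have stepCneg : ∀ i, i ≠ 1 → ∀ w ∈ Wc 1, (σ i)⁻¹ w ∈ Wc 1 := by
    intro i hi
    refine Stmt7Aux.main ((σ i)⁻¹) 1 1 ?_ ?_
    · intro j hj
      by_cases hji : j = i
      · subst hji
        rw [t1 j]
        exact avoid_x (succ_ne_one j)
      · by_cases hji1 : j = i + 1
        · subst hji1
          rw [t2 i]
          exact avoid_mul (avoid_mul (avoid_inv (avoid_x (succ_ne_one i))) (avoid_x hi))
            (avoid_x (succ_ne_one i))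
        · rw [t3 i j hji hji1]
          exact avoid_x hj
    · exact t3 i 1 (fun h => hi h.symm) (fun h => succ_ne_one i h.symm)
  -- the invariant set
  set SA : Set F := {g | ∃ w ∈ Wc 1, g = x 1 * w * (x 1)⁻¹} with hSA
  have hx2W : x 2 ∈ Wc 1 := by
    refine ⟨FreeGroup.of_ne_one 2, ?_, ?_⟩
    · rw [show (x 2).toWord = [(2, true)] from FreeGroup.toWord_of 2]
      intro p hp
      have h3 : ((2 : ℕ+), true) = p := by simpa using hp
      subst h3
      exact two_ne_one
    · rw [show (x 2).toWord = [(2, true)] from FreeGroup.toWord_of 2]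
      intro p hp
      have h3 : ((2 : ℕ+), true) = p := by simpa using hp
      subst h3
      exact two_ne_one
  have base : σ 1 (x 1) ∈ SA := ⟨x 2, hx2W, hσ1x1⟩
  have step : ∀ p : ℕ+ × Bool, p ≠ (1, false) →
      ∀ g ∈ SA, (if p.2 then σ p.1 else (σ p.1)⁻¹) g ∈ SA := by
    rintro ⟨j, b⟩ hp g ⟨w, hw, rfl⟩
    cases b
    · have hj : j ≠ 1 := fun h => hp (by rw [h])
      simp only [Bool.false_eq_true, if_false]
      have key : (σ j)⁻¹ (x 1 * w * (x 1)⁻¹) = x 1 * ((σ j)⁻¹ w) * (x 1)⁻¹ := by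
        rw [_root_.map_mul, _root_.map_mul, _root_.map_inv, t3 j 1 (fun h => hj h.symm)
          (fun h => succ_ne_one j h.symm)]
      rw [key]
      exact ⟨_, stepCneg j hj w hw, rfl⟩
    · simp only [if_true]
      by_cases hj : j = 1
      · subst hj
        have key : σ 1 (x 1 * w * (x 1)⁻¹) = x 1 * (x 2 * φB w * (x 2)⁻¹) * (x 1)⁻¹ := by
          rw [_root_.map_mul, _root_.map_mul, _root_.map_inv, hσ1x1, hφBapp]
          group
        rw [key]
        exact ⟨_, Stmt7Aux.sandwich two_ne_one (stepB w hw), rfl⟩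
      · have key : σ j (x 1 * w * (x 1)⁻¹) = x 1 * (σ j w) * (x 1)⁻¹ := by
          rw [_root_.map_mul, _root_.map_mul, _root_.map_inv, s3 j 1 (fun h => hj h.symm)
            (fun h => succ_ne_one j h.symm)]
        rw [key]
        exact ⟨_, stepCpos j hj w hw, rfl⟩
  have hSAne : ∀ g ∈ SA, g ≠ x 1 := by
    rintro g ⟨w, hw, rfl⟩ h
    have hw1 : w = x 1 := by
      have h2 : w = (x 1)⁻¹ * (x 1 * w * (x 1)⁻¹) * x 1 := by group
      rw [h] at h2
      rw [h2]
      group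
    have := hw.2.1 ((1 : ℕ+), true)
      (by rw [hw1, show (x 1).toWord = [(1, true)] from FreeGroup.toWord_of 1]; rfl)
    exact this rfl
  have listlem : ∀ l' : List (ℕ+ × Bool), (1, false) ∉ l' →
      (((l'.map fun p => if p.2 then σ p.1 else (σ p.1)⁻¹).prod (x 1) = x 1 ∨
        (l'.map fun p => if p.2 then σ p.1 else (σ p.1)⁻¹).prod (x 1) ∈ SA) ∧
       ((1, true) ∈ l' →
        (l'.map fun p => if p.2 then σ p.1 else (σ p.1)⁻¹).prod (x 1) ∈ SA)) := by
    intro l'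
    induction l' with
    | nil =>
      intro _
      constructor
      · left
        simp
      · intro h
        simp at h
    | cons p t ih =>
      intro hn
      have hnt : (1, false) ∉ t := fun h => hn (List.mem_cons_of_mem _ h)
      have hpne : p ≠ (1, false) := fun h => hn (h ▸ List.mem_cons_self)
      obtain ⟨ih1, ih2⟩ := ih hnt
      rw [List.map_cons, List.prod_cons, MulAut.mul_apply]
      rcases ih1 with hfix | hmem
      · rw [hfix]
        constructor
        · by_cases hj : p.1 = 1
          · have hpt : p = (1, true) := by
              rcases p with ⟨j, b⟩
              simp only at hj
              subst hj
              cases b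
              · exact absurd rfl hpne
              · rfl
            right
            rw [hpt]
            simpa using base
          · left
            rcases p with ⟨j, b⟩
            simp only at hj
            cases b
            · simp only [Bool.false_eq_true, if_false]
              exact t3 j 1 (fun h => hj h.symm) (fun h => succ_ne_one j h.symm)
            · simp only [if_true]
              exact s3 j 1 (fun h => hj h.symm) (fun h => succ_ne_one j h.symm)
        · intro hmem1
          rcases List.mem_cons.mp hmem1 with hp | hp
          · rw [← hp]
            simpa using base
          · exact absurd hfix (hSAne _ (ih2 hp))
      · have hstep := step p hpne _ hmem
        exact ⟨Or.inr hstep, fun _ => hstep⟩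
  obtain ⟨_, hforce⟩ := listlem l hnmem
  have hβA : β (x 1) ∈ SA := by rw [hβl]; exact hforce hmem1
  constructor
  · exact hSAne _ hβA
  · intro h
    apply hSAne _ hβA
    rw [h]
    rfl
end

section
/- If β = α_1 σ_1 α_2 σ_1 ⋯ σ_1 α_n where n ≥ 2 and each α_i lies in the subgroup of B generated by {σ_2, σ_3, …}, then β(x_1) ∈ x_1 W x_1^{-1}, where W is the set of nontrivial elements of F whose reduced word does not begin or end with x_1^{±1}. -/
namespace Pf
open FreeGroup List

def Rel (p q : ℕ+ × Bool) : Prop := ¬(p.1 = q.1 ∧ p.2 = !q.2)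

lemma chain'_reduce (L : List (ℕ+ × Bool)) : List.Chain' Rel (FreeGroup.reduce L) := by
  induction L with
  | nil => exact List.isChain_nil
  | cons a L ih =>
    rw [FreeGroup.reduce.cons]
    rcases h : FreeGroup.reduce L with _ | ⟨b, t⟩
    · exact List.isChain_singleton _
    · rw [h] at ih
      by_cases hc : a.1 = b.1 ∧ a.2 = !b.2
      · simp only [hc, if_true]
        exact ih.tail
      · simp only [hc, if_false]
        exact List.isChain_cons_cons.2 ⟨hc, ih⟩

lemma reduce_eq_self {L : List (ℕ+ × Bool)} (h : List.Chain' Rel L) : FreeGroup.reduce L = L := by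
  induction L with
  | nil => rfl
  | cons a L ih =>
    rw [FreeGroup.reduce.cons, ih h.tail]
    cases L with
    | nil => rfl
    | cons b t =>
      have : Rel a b := (List.isChain_cons_cons.1 h).1
      simp only [Rel] at this
      simp [this]

lemma chain'_toWord (g : F) : List.Chain' Rel g.toWord := by
  rw [← FreeGroup.reduce_toWord g]; exact chain'_reduce _

lemma toWord_mk_eq {L : List (ℕ+ × Bool)} (h : List.Chain' Rel L) :
    (FreeGroup.mk L).toWord = L := by
  rw [FreeGroup.toWord_mk, reduce_eq_self h]

/-- key concatenation lemma -/
lemma toWord_mul (a b : F)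
    (h : ∀ p ∈ a.toWord.getLast?, ∀ q ∈ b.toWord.head?, p.1 ≠ q.1) :
    (a * b).toWord = a.toWord ++ b.toWord := by
  conv_lhs => rw [← FreeGroup.mk_toWord (x := a), ← FreeGroup.mk_toWord (x := b)]
  rw [FreeGroup.mul_mk]
  refine toWord_mk_eq (List.isChain_append.2 ⟨chain'_toWord a, chain'_toWord b, ?_⟩)
  intro p hp q hq
  exact fun hc => h p hp q hq hc.1


/-- elements none of whose letters is `t` -/
def Hsub (t : ℕ+) : Subgroup F where
  carrier := {g | ∀ p ∈ g.toWord, p.1 ≠ t}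
  one_mem' := by simp [FreeGroup.toWord_one]
  mul_mem' := by
    intro a b ha hb p hp
    have := (FreeGroup.toWord_mul_sublist a b).mem hp
    rcases List.mem_append.1 this with h | h
    exacts [ha p h, hb p h]
  inv_mem' := by
    intro a ha p hp
    rw [FreeGroup.toWord_inv] at hp
    unfold FreeGroup.invRev at hp
    rw [List.mem_reverse, List.mem_map] at hp
    obtain ⟨q, hq, rfl⟩ := hp
    exact ha q hq

lemma mem_Hsub {t : ℕ+} {g : F} : g ∈ Hsub t ↔ ∀ p ∈ g.toWord, p.1 ≠ t := Iff.rfl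

lemma x_mem_Hsub {t k : ℕ+} (h : k ≠ t) : x k ∈ Hsub t := by
  intro p hp
  simp [x, FreeGroup.toWord_of] at hp
  rw [hp]; exact h

/-- letters in S implies membership in closure of corresponding generators -/
lemma mk_mem_closure (S : Set ℕ+) :
    ∀ L : List (ℕ+ × Bool), (∀ p ∈ L, p.1 ∈ S) →
      FreeGroup.mk L ∈ Subgroup.closure (FreeGroup.of '' S)
  | [], _ => by
      have : (FreeGroup.mk ([] : List (ℕ+ × Bool))) = 1 := by
        rw [← FreeGroup.toWord_eq_nil_iff, FreeGroup.toWord_mk]; rfl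
      rw [this]; exact one_mem _
  | p :: L, h => by
      have h1 : FreeGroup.mk (p :: L) = FreeGroup.mk [p] * FreeGroup.mk L := by
        rw [FreeGroup.mul_mk]; rfl
      rw [h1]
      refine mul_mem ?_ (mk_mem_closure S L fun q hq => h q (List.mem_cons_of_mem _ hq))
      have hmem : FreeGroup.of p.1 ∈ Subgroup.closure (FreeGroup.of '' S) :=
        Subgroup.subset_closure ⟨p.1, h p (List.mem_cons_self), rfl⟩
      rcases p with ⟨a, _ | _⟩
      · have : FreeGroup.mk [(a, false)] = (FreeGroup.of a)⁻¹ := by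
          rw [show FreeGroup.of a = FreeGroup.mk [(a, true)] from rfl, FreeGroup.inv_mk]; rfl
        rw [this]; exact inv_mem hmem
      · exact hmem

lemma mem_closure_of_letters {S : Set ℕ+} {g : F} (h : ∀ p ∈ g.toWord, p.1 ∈ S) :
    g ∈ Subgroup.closure (FreeGroup.of '' S) := by
  rw [← FreeGroup.mk_toWord (x := g)]
  exact mk_mem_closure S _ h

def P (t : ℕ+) : Set F := {g | g ≠ 1 ∧ ∀ p ∈ g.toWord, p.1 = t}

lemma P_eq_pow {t : ℕ+} {g : F} (h : g ∈ P t) : ∃ e : ℤ, e ≠ 0 ∧ g = x t ^ e := by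
  have : g ∈ Subgroup.closure ({x t} : Set F) := by
    have := mem_closure_of_letters (S := {t}) (g := g) (fun p hp => h.2 p hp)
    rwa [Set.image_singleton] at this
  obtain ⟨e, he⟩ := Subgroup.mem_closure_singleton.1 this
  refine ⟨e, fun h0 => h.1 ?_, he.symm⟩
  rw [← he, h0, zpow_zero]

lemma xpow_mem_P {t : ℕ+} {e : ℤ} (he : e ≠ 0) : x t ^ e ∈ P t := by
  have hrep : ∀ n : ℕ, 0 < n → x t ^ (n : ℤ) ∈ P t := by
    intro n hn
    constructor
    · intro h1
      have := FreeGroup.toWord_eq_nil_iff.2 h1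
      rw [zpow_natCast, x, FreeGroup.toWord_of_pow] at this
      have : n = 0 := by simpa using congrArg List.length this
      omega
    · intro p hp
      rw [zpow_natCast, x, FreeGroup.toWord_of_pow] at hp
      exact congrArg Prod.fst (List.eq_of_mem_replicate hp)
  rcases lt_trichotomy e 0 with h | h | h
  · have : x t ^ e = (x t ^ ((-e).toNat : ℤ))⁻¹ := by
      rw [← zpow_neg]; congr 1; omega
    rw [this]
    have hm := hrep (-e).toNat (by omega)
    constructor
    · simpa [inv_eq_one] using hm.1
    · intro p hp
      rw [FreeGroup.toWord_inv] at hp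
      unfold FreeGroup.invRev at hp
      rw [List.mem_reverse, List.mem_map] at hp
      obtain ⟨q, hq, rfl⟩ := hp
      exact hm.2 q hq
  · exact absurd h he
  · have : x t ^ e = x t ^ ((e.toNat : ℕ) : ℤ) := by congr 1; omega
    rw [this]; exact hrep e.toNat (by omega)


/-- nontrivial elements whose reduced word avoids letter `t` at both ends -/
def WB (t : ℕ+) : Set F :=
  {w | w ≠ 1 ∧ (∀ p ∈ w.toWord.head?, p.1 ≠ t) ∧ (∀ p ∈ w.toWord.getLast?, p.1 ≠ t)}

lemma ne_one_iff {g : F} : g ≠ 1 ↔ g.toWord ≠ [] := by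
  rw [ne_eq, ← FreeGroup.toWord_eq_nil_iff]

lemma Hsub_sub_WB {t : ℕ+} {h : F} (hh : h ∈ Hsub t) (h1 : h ≠ 1) : h ∈ WB t :=
  ⟨h1, fun p hp => mem_Hsub.1 hh p (List.mem_of_mem_head? hp),
    fun p hp => mem_Hsub.1 hh p (List.mem_of_mem_getLast? hp)⟩

lemma toWord_mul_P {t : ℕ+} {w p : F} (hw : w ∈ WB t) (hp : p ∈ P t) :
    (w * p).toWord = w.toWord ++ p.toWord := by
  refine toWord_mul w p fun a ha b hb => ?_
  rw [hp.2 b (List.mem_of_mem_head? hb)]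
  exact hw.2.2 a ha

lemma WB_mul_P_head {t : ℕ+} {w p : F} (hw : w ∈ WB t) (hp : p ∈ P t) :
    (w * p).toWord.head? = w.toWord.head? := by
  rw [toWord_mul_P hw hp]
  cases hA : w.toWord with
  | nil => exact absurd hA (ne_one_iff.1 hw.1)
  | cons a tl => simp

lemma WB_mul_P_last {t : ℕ+} {w p : F} (hw : w ∈ WB t) (hp : p ∈ P t) :
    ∀ a ∈ (w * p).toWord.getLast?, a.1 = t := by
  intro a ha
  rw [toWord_mul_P hw hp, List.getLast?_append_of_ne_nil _ (ne_one_iff.1 hp.1)] at ha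
  exact hp.2 a (List.mem_of_mem_getLast? ha)

/-- the central "alternating step" lemma -/
lemma WB_mul_P_mul_H {t : ℕ+} {w p h : F} (hw : w ∈ WB t) (hp : p ∈ P t)
    (hh : h ∈ Hsub t) (h1 : h ≠ 1) : w * p * h ∈ WB t ∧
      (w * p * h).toWord.head? = w.toWord.head? := by
  have hwp1 : w * p ≠ 1 := by
    rw [ne_one_iff, toWord_mul_P hw hp]
    simp [ne_one_iff.1 hw.1]
  have hmul2 : (w * p * h).toWord = (w * p).toWord ++ h.toWord := by
    refine toWord_mul _ _ fun a ha b hb => ?_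
    rw [WB_mul_P_last hw hp a ha]
    exact fun hc => mem_Hsub.1 hh b (List.mem_of_mem_head? hb) hc.symm
  have hne : (w * p * h).toWord ≠ [] := by
    rw [hmul2]; simp [ne_one_iff.1 hwp1]
  have hhead : (w * p * h).toWord.head? = w.toWord.head? := by
    rw [hmul2, List.head?_append_of_ne_nil _ (ne_one_iff.1 hwp1)]
    exact WB_mul_P_head hw hp
  refine ⟨⟨ne_one_iff.2 hne, ?_, ?_⟩, hhead⟩
  · rw [hhead]; exact hw.2.1
  · rw [hmul2, List.getLast?_append_of_ne_nil _ (ne_one_iff.1 h1)]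
    intro a ha
    exact mem_Hsub.1 hh a (List.mem_of_mem_getLast? ha)


/-- alternating products: `h₀ * x₁^{e₁} * h₁ * ⋯` -/
inductive IsAlt : F → Prop
  | base {h : F} (hh : h ∈ Hsub 1) (h1 : h ≠ 1) : IsAlt h
  | step {w h : F} {e : ℤ} (hw : IsAlt w) (he : e ≠ 0) (hh : h ∈ Hsub 1) (h1 : h ≠ 1) :
      IsAlt (w * x 1 ^ e * h)

lemma alt_sub_WB {g : F} (hg : IsAlt g) : g ∈ WB 1 := by
  induction hg with
  | base hh h1 => exact Hsub_sub_WB hh h1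
  | step hw he hh h1 ih => exact (WB_mul_P_mul_H ih (xpow_mem_P he) hh h1).1

lemma head?_dropWhile_not' {α : Type*} (p : α → Bool) (l : List α) {a : α}
    (h : a ∈ (l.dropWhile p).head?) : p a = false := by
  induction l with
  | nil => simp at h
  | cons y t ih =>
    by_cases hy : p y
    · rw [List.dropWhile_cons_of_pos hy] at h; exact ih h
    · rw [List.dropWhile_cons_of_neg hy] at h
      have : a = y := by simpa using h.symm
      rw [this]; simpa using hy

lemma WB_sub_alt : ∀ (n : ℕ) (g : F), g ∈ WB 1 → g.toWord.length ≤ n → IsAlt g := by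
  intro n
  induction n using Nat.strong_induction_on with
  | _ n ih =>
    intro g hg hlen
    by_cases hall : ∀ p ∈ g.toWord, p.1 ≠ 1
    · exact IsAlt.base (mem_Hsub.2 hall) hg.1
    · set c : (ℕ+ × Bool) → Bool := fun p => decide (p.1 ≠ 1) with hc
      set b : (ℕ+ × Bool) → Bool := fun p => decide (p.1 = 1) with hb
      set L := g.toWord with hLdef
      set R := L.reverse with hRdef
      set Crev := R.takeWhile c with hCrev
      set R1 := R.dropWhile c with hR1
      set Brev := R1.takeWhile b with hBrev
      set Arev := R1.dropWhile b with hArev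
      have hLne : L ≠ [] := ne_one_iff.1 hg.1
      have hRsplit : R = Crev ++ R1 := (List.takeWhile_append_dropWhile (p := c) (l := R)).symm
      have hR1split : R1 = Brev ++ Arev := (List.takeWhile_append_dropWhile (p := b) (l := R1)).symm
      have hR1ne : R1 ≠ [] := by
        intro hnil
        apply hall
        intro p hp
        have hpR : p ∈ R := by rw [hRdef, List.mem_reverse]; exact hp
        have : ∀ q ∈ R, c q = true := List.dropWhile_eq_nil_iff.1 hnil
        simpa [hc] using this p hpR
      have hBne : Brev ≠ [] := by
        intro hnil
        obtain ⟨r, R1', hR1eq⟩ := List.exists_cons_of_ne_nil hR1ne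
        have hrhead : r ∈ R1.head? := by rw [hR1eq]; simp
        have hcr : c r = false := head?_dropWhile_not' c R hrhead
        have hbr : b r = true := by
          have : ¬ r.1 ≠ 1 := by simpa [hc] using hcr
          simp [hb]; simpa using this
        have hsome : Brev.head? = some r := by
          show (R1.takeWhile b).head? = some r
          rw [List.head?_takeWhile, hR1eq]
          simp [hbr]
        rw [hnil] at hsome; simp at hsome
      have hBf : ∀ p ∈ Brev, p.1 = 1 := fun p hp => by
        simpa [hb] using List.mem_takeWhile_imp hp
      have hCf : ∀ p ∈ Crev, p.1 ≠ 1 := fun p hp => by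
        simpa [hc] using List.mem_takeWhile_imp hp
      have hRne : R ≠ [] := by
        show L.reverse ≠ []
        simpa using hLne
      have hCne : Crev ≠ [] := by
        intro hnil
        obtain ⟨rl, R', hReq⟩ := List.exists_cons_of_ne_nil hRne
        have hrl : R.head? = some rl := by rw [hReq]; rfl
        have hlast : rl ∈ L.getLast? := by
          rw [← List.head?_reverse]
          show rl ∈ R.head?
          rw [hrl]; rfl
        have hcrl : c rl = true := by simp [hc]; exact hg.2.2 rl hlast
        have hsome : Crev.head? = some rl := by
          show (R.takeWhile c).head? = some rl
          rw [List.head?_takeWhile, hrl]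
          simp [hcrl]
        rw [hnil] at hsome; simp at hsome
      set A := Arev.reverse with hA
      set B := Brev.reverse with hBdef
      set C := Crev.reverse with hCdef
      have hLsplit : L = A ++ B ++ C := by
        have : L = R.reverse := by rw [hRdef, List.reverse_reverse]
        rw [this, hRsplit, hR1split]
        simp [hA, hBdef, hCdef, List.reverse_append]
      have hAne : A ≠ [] := by
        intro hnil
        have hBne' : B ≠ [] := by simpa [hBdef] using hBne
        have hhead : L.head? = B.head? := by
          rw [hLsplit, hnil, List.nil_append, List.head?_append_of_ne_nil _ hBne']
        have hpB : B.head? = some (B.head hBne') := List.head?_eq_head hBne'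
        have h1 : (B.head hBne').1 ≠ 1 := by
          refine hg.2.1 _ ?_
          show B.head hBne' ∈ L.head?
          rw [hhead, hpB]; rfl
        exact h1 (hBf _ (List.mem_reverse.1 (show B.head hBne' ∈ Brev.reverse from List.head_mem hBne')))
      have hAlast : ∀ p ∈ A.getLast?, p.1 ≠ 1 := by
        intro p hp
        rw [hA, List.getLast?_reverse] at hp
        have : b p = false := head?_dropWhile_not' b R1 hp
        simpa [hb] using this
      have hAhead : ∀ p ∈ A.head?, p.1 ≠ 1 := by
        have hLA : L.head? = A.head? := by
          rw [hLsplit, List.append_assoc, List.head?_append_of_ne_nil _ hAne]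
        intro p hp
        refine hg.2.1 p ?_
        show p ∈ L.head?
        rw [hLA]; exact hp
      have hchain : List.Chain' Rel L := chain'_toWord g
      have hchA : List.Chain' Rel A :=
        hchain.prefix ⟨B ++ C, by rw [hLsplit, List.append_assoc]⟩
      have hchB : List.Chain' Rel B := hchain.infix ⟨A, C, hLsplit.symm⟩
      have hchC : List.Chain' Rel C := hchain.suffix ⟨A ++ B, hLsplit.symm⟩
      have htA : (FreeGroup.mk A).toWord = A := toWord_mk_eq hchA
      have htB : (FreeGroup.mk B).toWord = B := toWord_mk_eq hchB
      have htC : (FreeGroup.mk C).toWord = C := toWord_mk_eq hchC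
      have hgsplit : g = FreeGroup.mk A * FreeGroup.mk B * FreeGroup.mk C := by
        rw [FreeGroup.mul_mk, FreeGroup.mul_mk, ← hLsplit]
        exact FreeGroup.mk_toWord.symm
      have hmkAW : FreeGroup.mk A ∈ WB 1 :=
        ⟨ne_one_iff.2 (by rw [htA]; exact hAne), by rw [htA]; exact hAhead,
          by rw [htA]; exact hAlast⟩
      have hBne' : B ≠ [] := by simpa [hBdef] using hBne
      have hCne' : C ≠ [] := by simpa [hCdef] using hCne
      have hlenA : A.length < n := by
        have h1 : L.length = A.length + B.length + C.length := by rw [hLsplit]; simp [Nat.add_assoc]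
        have h2 : 0 < B.length := List.length_pos_iff.2 hBne'
        have h3 : L.length ≤ n := hlen
        omega
      have hIA : IsAlt (FreeGroup.mk A) := ih A.length hlenA _ hmkAW (le_of_eq (by rw [htA]))
      have hmkBP : FreeGroup.mk B ∈ P 1 := by
        refine ⟨ne_one_iff.2 (by rw [htB]; exact hBne'), ?_⟩
        rw [htB]
        intro p hp
        exact hBf p (List.mem_reverse.1 (by rw [← hBdef]; exact hp))
      obtain ⟨e, he, hBe⟩ := P_eq_pow hmkBP
      have hmkCH : FreeGroup.mk C ∈ Hsub 1 := by
        refine mem_Hsub.2 ?_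
        rw [htC]
        intro p hp
        exact hCf p (List.mem_reverse.1 (by rw [← hCdef]; exact hp))
      have hmkC1 : FreeGroup.mk C ≠ 1 := ne_one_iff.2 (by rw [htC]; exact hCne')
      rw [hgsplit, hBe]
      exact IsAlt.step hIA he hmkCH hmkC1


section Auts
variable {σ : ℕ+ → MulAut F} (hσ : IsArtin σ)

lemma one_ne_succ (j : ℕ+) : (1 : ℕ+) ≠ j + 1 := by
  intro h
  have h2 : (1 : ℕ) = (j : ℕ) + 1 := by exact_mod_cast congrArg PNat.val h
  have := j.pos
  omega

lemma aut_ne_one {α : MulAut F} {g : F} (h : g ≠ 1) : α g ≠ 1 := by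
  intro h0
  apply h
  have := congrArg (α⁻¹ : MulAut F) h0
  rwa [MulAut.inv_apply_self, _root_.map_one] at this

def Sgens (σ : ℕ+ → MulAut F) : Set (MulAut F) := {τ : MulAut F | ∃ j : ℕ+, j ≠ 1 ∧ τ = σ j}

def gen1 : Set ℕ+ := {k | k ≠ 1}

lemma Hsub_closure_le {g : F} (hg : g ∈ Hsub 1) :
    g ∈ Subgroup.closure (FreeGroup.of '' gen1) :=
  mem_closure_of_letters fun p hp => mem_Hsub.1 hg p hp

include hσ

lemma sig_fix_x1 {j : ℕ+} (hj : j ≠ 1) : σ j (x 1) = x 1 :=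
  (hσ j).2.2 1 (Ne.symm hj) (one_ne_succ j)

lemma siginv_fix_x1 {j : ℕ+} (hj : j ≠ 1) : (σ j)⁻¹ (x 1) = x 1 := by
  have := congrArg ((σ j)⁻¹ : MulAut F) (sig_fix_x1 hσ hj)
  rw [MulAut.inv_apply_self] at this
  exact this.symm

lemma sig_mem_Hsub {j : ℕ+} (hj : j ≠ 1) {g : F} (hg : g ∈ Hsub 1) : σ j g ∈ Hsub 1 := by
  have hle : Subgroup.closure (FreeGroup.of '' gen1) ≤
      (Hsub 1).comap (σ j : F ≃* F).toMonoidHom := by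
    rw [Subgroup.closure_le]
    rintro y ⟨k, hk, rfl⟩
    simp only [Subgroup.coe_comap, Set.mem_preimage, MulEquiv.coe_toMonoidHom, SetLike.mem_coe]
    show σ j (x k) ∈ Hsub 1
    by_cases h1 : k = j
    · subst h1
      rw [(hσ k).1]
      exact mul_mem (mul_mem (x_mem_Hsub hk) (x_mem_Hsub (Ne.symm (one_ne_succ k))))
        (inv_mem (x_mem_Hsub hk))
    · by_cases h2 : k = j + 1
      · subst h2
        rw [(hσ j).2.1]
        exact x_mem_Hsub hj
      · rw [(hσ j).2.2 k h1 h2]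
        exact x_mem_Hsub hk
  exact hle (Hsub_closure_le hg)

lemma siginv_vals {j : ℕ+} :
    (σ j)⁻¹ (x j) = x (j + 1) ∧
    (σ j)⁻¹ (x (j + 1)) = (x (j + 1))⁻¹ * x j * x (j + 1) ∧
    ∀ k : ℕ+, k ≠ j → k ≠ j + 1 → (σ j)⁻¹ (x k) = x k := by
  refine ⟨?_, ?_, ?_⟩
  · have := congrArg ((σ j)⁻¹ : MulAut F) (hσ j).2.1
    rw [MulAut.inv_apply_self] at this
    exact this.symm
  · apply (σ j).injective
    rw [MulAut.apply_inv_self]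
    rw [_root_.map_mul, _root_.map_mul, _root_.map_inv, (hσ j).1, (hσ j).2.1]
    group
  · intro k h1 h2
    have := congrArg ((σ j)⁻¹ : MulAut F) ((hσ j).2.2 k h1 h2)
    rw [MulAut.inv_apply_self] at this
    exact this.symm

lemma siginv_mem_Hsub {j : ℕ+} (hj : j ≠ 1) {g : F} (hg : g ∈ Hsub 1) :
    (σ j)⁻¹ g ∈ Hsub 1 := by
  obtain ⟨v1, v2, v3⟩ := siginv_vals hσ (j := j)
  have hle : Subgroup.closure (FreeGroup.of '' gen1) ≤
      (Hsub 1).comap ((σ j)⁻¹ : F ≃* F).toMonoidHom := by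
    rw [Subgroup.closure_le]
    rintro y ⟨k, hk, rfl⟩
    simp only [Subgroup.coe_comap, Set.mem_preimage, MulEquiv.coe_toMonoidHom, SetLike.mem_coe]
    show (σ j)⁻¹ (x k) ∈ Hsub 1
    by_cases h1 : k = j
    · subst h1
      rw [v1]
      exact x_mem_Hsub (Ne.symm (one_ne_succ k))
    · by_cases h2 : k = j + 1
      · subst h2
        rw [v2]
        exact mul_mem (mul_mem (inv_mem (x_mem_Hsub (Ne.symm (one_ne_succ j))))
          (x_mem_Hsub hj)) (x_mem_Hsub (Ne.symm (one_ne_succ j)))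
      · rw [v3 k h1 h2]
        exact x_mem_Hsub hk
  exact hle (Hsub_closure_le hg)

lemma alpha_props {α : MulAut F} (hα : α ∈ Subgroup.closure (Sgens σ)) :
    α (x 1) = x 1 ∧ ∀ g ∈ Hsub 1, α g ∈ Hsub 1 := by
  have main : (α (x 1) = x 1 ∧ ∀ g ∈ Hsub 1, α g ∈ Hsub 1) ∧
      (α⁻¹ (x 1) = x 1 ∧ ∀ g ∈ Hsub 1, α⁻¹ g ∈ Hsub 1) := by
    refine Subgroup.closure_induction
      (p := fun τ _ => (τ (x 1) = x 1 ∧ ∀ g ∈ Hsub 1, τ g ∈ Hsub 1) ∧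
        (τ⁻¹ (x 1) = x 1 ∧ ∀ g ∈ Hsub 1, τ⁻¹ g ∈ Hsub 1)) ?_ ?_ ?_ ?_ hα
    · rintro τ ⟨j, hj, rfl⟩
      exact ⟨⟨sig_fix_x1 hσ hj, fun g hg => sig_mem_Hsub hσ hj hg⟩,
        ⟨siginv_fix_x1 hσ hj, fun g hg => siginv_mem_Hsub hσ hj hg⟩⟩
    · simp only [inv_one]
      constructor <;> exact ⟨rfl, fun g hg => hg⟩
    · rintro τ₁ τ₂ _ _ ⟨⟨f1, m1⟩, ⟨fi1, mi1⟩⟩ ⟨⟨f2, m2⟩, ⟨fi2, mi2⟩⟩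
      refine ⟨⟨?_, fun g hg => ?_⟩, ⟨?_, fun g hg => ?_⟩⟩
      · rw [MulAut.mul_apply, f2, f1]
      · rw [MulAut.mul_apply]; exact m1 _ (m2 _ hg)
      · rw [mul_inv_rev, MulAut.mul_apply, fi1, fi2]
      · rw [mul_inv_rev, MulAut.mul_apply]; exact mi2 _ (mi1 _ hg)
    · rintro τ _ ⟨h1, h2⟩
      refine ⟨h2, ?_⟩
      rwa [inv_inv]
  exact main.1

lemma alpha_alt {α : MulAut F} (hα : α ∈ Subgroup.closure (Sgens σ)) {w : F}
    (hw : IsAlt w) : IsAlt (α w) := by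
  induction hw with
  | base hh h1 => exact IsAlt.base ((alpha_props hσ hα).2 _ hh) (aut_ne_one h1)
  | step hw' he hh h1 ih =>
    rw [_root_.map_mul, _root_.map_mul, _root_.map_zpow, (alpha_props hσ hα).1]
    exact IsAlt.step ih he ((alpha_props hσ hα).2 _ hh) (aut_ne_one h1)

omit hσ in
lemma x2_eq : x (1 + 1) = x 2 := rfl

lemma psi_mem {h : F} (hh : h ∈ Hsub 1) : (x 1)⁻¹ * σ 1 h * x 1 ∈ Hsub 2 := by
  have hle : Subgroup.closure (FreeGroup.of '' gen1) ≤
      (Hsub 2).comap (((MulAut.conj ((x 1)⁻¹)).toMonoidHom).comp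
        ((σ 1 : F ≃* F).toMonoidHom)) := by
    rw [Subgroup.closure_le]
    rintro y ⟨k, hk, rfl⟩
    simp only [Subgroup.coe_comap, Set.mem_preimage, MonoidHom.coe_comp,
      MulEquiv.coe_toMonoidHom, Function.comp_apply, SetLike.mem_coe, MulAut.conj_apply]
    show (x 1)⁻¹ * σ 1 (x k) * ((x 1)⁻¹)⁻¹ ∈ Hsub 2
    rw [inv_inv]
    by_cases h2 : k = 2
    · subst h2
      rw [show σ 1 (x 2) = x 1 from (hσ 1).2.1]
      have : (x 1)⁻¹ * x 1 * x 1 = x 1 := by group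
      rw [this]
      exact x_mem_Hsub (by decide)
    · rw [(hσ 1).2.2 k hk h2]
      exact mul_mem (mul_mem (inv_mem (x_mem_Hsub (by decide))) (x_mem_Hsub h2))
        (x_mem_Hsub (by decide))
  have := hle (Hsub_closure_le hh)
  simp only [Subgroup.mem_comap, MonoidHom.coe_comp, MulEquiv.coe_toMonoidHom,
    Function.comp_apply, MulAut.conj_apply, inv_inv] at this
  exact this

omit hσ in
lemma psi_ne_one {h : F} (h1 : h ≠ 1) : (x 1)⁻¹ * σ 1 h * x 1 ≠ 1 := by
  intro h0
  apply aut_ne_one (α := σ 1) h1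
  have hid : σ 1 h = x 1 * ((x 1)⁻¹ * σ 1 h * x 1) * (x 1)⁻¹ := by group
  rw [hid, h0]
  group

lemma m_step {w : F} (hw : IsAlt w) : (x 1)⁻¹ * σ 1 w * x 1 ∈ WB 2 := by
  induction hw with
  | @base h hh h1 => exact Hsub_sub_WB (psi_mem hσ hh) (psi_ne_one h1)
  | @step w h e hw' he hh h1 ih =>
    have key : (x 1)⁻¹ * σ 1 (w * x 1 ^ e * h) * x 1
        = ((x 1)⁻¹ * σ 1 w * x 1) * x 2 ^ e * ((x 1)⁻¹ * σ 1 h * x 1) := by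
      rw [_root_.map_mul, _root_.map_mul, _root_.map_zpow, (hσ 1).1, x2_eq, conj_zpow]
      group
    rw [key]
    exact (WB_mul_P_mul_H ih (xpow_mem_P he) (psi_mem hσ hh) (psi_ne_one h1)).1

omit hσ in
lemma x2_conj_WB {m : F} (hm : m ∈ WB 2) : x 2 * m * (x 2)⁻¹ ∈ WB 1 := by
  have hx2 : (x 2 : F).toWord = [((2:ℕ+), true)] := by
    simp [x, FreeGroup.toWord_of]
  have hx2i : ((x 2)⁻¹ : F).toWord = [((2:ℕ+), false)] := by
    simp [x, FreeGroup.toWord_inv, FreeGroup.toWord_of, FreeGroup.invRev]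
  have hmne : m.toWord ≠ [] := ne_one_iff.1 hm.1
  have t1 : (x 2 * m).toWord = ((2:ℕ+), true) :: m.toWord := by
    have hj : ∀ p ∈ (x 2 : F).toWord.getLast?, ∀ q ∈ m.toWord.head?, p.1 ≠ q.1 := by
      intro p hp q hq
      rw [hx2] at hp
      have hp' : p = ((2:ℕ+), true) := Eq.symm (by simpa using hp)
      have h2 := hm.2.1 q hq
      rw [hp']
      exact fun hc => h2 hc.symm
    have := toWord_mul (x 2) m hj
    rw [hx2] at this
    exact this
  have t2 : (x 2 * m * (x 2)⁻¹).toWord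
      = (((2:ℕ+), true) :: m.toWord) ++ [((2:ℕ+), false)] := by
    have hj : ∀ p ∈ (x 2 * m).toWord.getLast?, ∀ q ∈ ((x 2)⁻¹ : F).toWord.head?,
        p.1 ≠ q.1 := by
      intro p hp q hq
      rw [t1] at hp
      rw [hx2i] at hq
      have hq' : q = ((2:ℕ+), false) := Eq.symm (by simpa using hq)
      have hplast : p ∈ m.toWord.getLast? := by
        rw [show (((2:ℕ+),true) :: m.toWord) = [((2:ℕ+),true)] ++ m.toWord from rfl,
          List.getLast?_append_of_ne_nil _ hmne] at hp
        exact hp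
      have := hm.2.2 p hplast
      rw [hq']
      exact this
    have := toWord_mul (x 2 * m) ((x 2)⁻¹) hj
    rw [t1, hx2i] at this
    exact this
  refine ⟨?_, ?_, ?_⟩
  · rw [ne_one_iff, t2]; simp
  · rw [t2]
    intro p hp
    have : p = ((2:ℕ+),true) := Eq.symm (by simpa using hp)
    rw [this]
    decide
  · rw [t2, List.getLast?_append_of_ne_nil _ (by simp : ([((2:ℕ+),false)] : List (ℕ+ × Bool)) ≠ [])]
    intro p hp
    have : p = ((2:ℕ+),false) := Eq.symm (by simpa using hp)
    rw [this]
    decide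

lemma sigma_step {w : F} (hw : IsAlt w) :
    ∃ w', IsAlt w' ∧ σ 1 (x 1 * w * (x 1)⁻¹) = x 1 * w' * (x 1)⁻¹ := by
  have hmWB : (x 1)⁻¹ * σ 1 w * x 1 ∈ WB 2 := m_step hσ hw
  set w' := x 2 * ((x 1)⁻¹ * σ 1 w * x 1) * (x 2)⁻¹ with hw'def
  have hWB1 : w' ∈ WB 1 := x2_conj_WB hmWB
  refine ⟨w', WB_sub_alt w'.toWord.length w' hWB1 le_rfl, ?_⟩
  rw [_root_.map_mul, _root_.map_mul, _root_.map_inv, (hσ 1).1, x2_eq, hw'def]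
  group

lemma main_aux : ∀ (t : List (MulAut F)) (a b : MulAut F),
    (∀ τ ∈ a :: b :: t, τ ∈ Subgroup.closure (Sgens σ)) →
    ∃ w, IsAlt w ∧ (List.intersperse (σ 1) (a :: b :: t)).prod (x 1) = x 1 * w * (x 1)⁻¹ := by
  intro t
  induction t with
  | nil =>
    intro a b hmem
    have ha := hmem a (by simp)
    have hb := hmem b (by simp)
    have hx2alt : IsAlt (x 2) :=
      IsAlt.base (x_mem_Hsub (by decide)) (FreeGroup.of_ne_one 2)
    refine ⟨a (x 2), alpha_alt hσ ha hx2alt, ?_⟩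
    rw [List.intersperse_cons_cons, List.intersperse_singleton,
      List.prod_cons, List.prod_cons, List.prod_singleton,
      MulAut.mul_apply, MulAut.mul_apply, (alpha_props hσ hb).1,
      (hσ 1).1, x2_eq, _root_.map_mul, _root_.map_mul, _root_.map_inv, (alpha_props hσ ha).1]
  | cons c t ih =>
    intro a b hmem
    have ha := hmem a (by simp)
    obtain ⟨w, hw, heq⟩ := ih b c fun τ hτ => hmem τ (by simp at hτ ⊢; tauto)
    obtain ⟨w', hw', heq'⟩ := sigma_step hσ hw
    refine ⟨a w', alpha_alt hσ ha hw', ?_⟩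
    rw [List.intersperse_cons_cons, List.prod_cons, List.prod_cons,
      MulAut.mul_apply, MulAut.mul_apply, heq, heq', _root_.map_mul, _root_.map_mul, _root_.map_inv,
      (alpha_props hσ ha).1]

end Auts

end Pf

theorem stmt8 (σ : ℕ+ → MulAut F) (hσ : IsArtin σ) (n : ℕ) (hn : 2 ≤ n)
    (α : Fin n → MulAut F)
    (hα : ∀ i : Fin n, α i ∈ Subgroup.closure {τ : MulAut F | ∃ j : ℕ+, j ≠ 1 ∧ τ = σ j}) :
    (((List.ofFn α).intersperse (σ 1)).prod) (x 1) ∈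
      {y : F | ∃ w ∈ W, y = x 1 * w * (x 1)⁻¹} := by
  have hlen : (List.ofFn α).length = n := List.length_ofFn (f := α)
  obtain ⟨a, b, t, habt⟩ : ∃ a b t, List.ofFn α = a :: b :: t := by
    rcases h : List.ofFn α with _ | ⟨a, _ | ⟨b, t⟩⟩
    · rw [h] at hlen; simp at hlen; omega
    · rw [h] at hlen; simp at hlen; omega
    · exact ⟨a, b, t, rfl⟩
  have hmem : ∀ τ ∈ a :: b :: t, τ ∈ Subgroup.closure (Pf.Sgens σ) := by
    intro τ hτ
    have hτ' : τ ∈ List.ofFn α := by rw [habt]; exact hτ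
    rw [List.mem_ofFn] at hτ'
    obtain ⟨i, rfl⟩ := hτ'
    exact hα i
  obtain ⟨w, hw, heq⟩ := Pf.main_aux hσ t a b hmem
  rw [habt]
  exact ⟨w, Pf.alt_sub_WB hw, heq⟩
end

section
/- The operation α * β = α · s(β) · σ_1 · s(α^{-1}) on the braid group B_∞ is left self-distributive: α * (β * γ) = (α * β) * (α * γ) for all α, β, γ. -/
/-- The braid relations on the free group over the generator indices. -/
def braidRels : Set (FreeGroup ℕ+) :=
  {r | (∃ i : ℕ+, r = .of i * .of (i + 1) * .of i * (.of (i + 1) * .of i * .of (i + 1))⁻¹) ∨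
       (∃ i j : ℕ+, i + 1 < j ∧ r = .of i * .of j * (.of j * .of i)⁻¹)}

/-- The braid group `B_∞` on infinitely many strands. -/
abbrev Binf := PresentedGroup braidRels

/-- The generators `σ 1, σ 2, …` of `B_∞`. -/
noncomputable def σB (i : ℕ+) : Binf := PresentedGroup.of i

lemma braid_rel_one {r : FreeGroup ℕ+} (hr : r ∈ braidRels) :
    PresentedGroup.mk braidRels r = 1 :=
  (QuotientGroup.eq_one_iff r).mpr (Subgroup.subset_normalClosure hr)

lemma σB_braid (i : ℕ+) : σB i * σB (i+1) * σB i = σB (i+1) * σB i * σB (i+1) := by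
  have h := braid_rel_one (Or.inl ⟨i, rfl⟩)
  rw [map_mul, map_inv, mul_inv_eq_one, map_mul, map_mul, map_mul, map_mul] at h
  exact h

lemma σB_comm {i j : ℕ+} (h : i + 1 < j) : Commute (σB i) (σB j) := by
  have h1 := braid_rel_one (Or.inr ⟨i, j, h, rfl⟩)
  rw [map_mul, map_inv, mul_inv_eq_one, map_mul, map_mul] at h1
  exact h1

lemma comm_ss (s : Binf →* Binf) (hs : ∀ i : ℕ+, s (σB i) = σB (i + 1)) (g : Binf) :
    Commute (σB 1) (s (s g)) := by
  have key : (MulAut.conj (σB 1)).toMonoidHom.comp (s.comp s) = s.comp s := by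
    apply PresentedGroup.ext
    intro i
    have : s (s (PresentedGroup.of i)) = σB (i + 1 + 1) := by
      have : (PresentedGroup.of i : Binf) = σB i := rfl
      rw [this, hs, hs]
    simp only [MonoidHom.comp_apply, MulEquiv.coe_toMonoidHom, this, MulAut.conj_apply]
    have hcomm : Commute (σB 1) (σB (i + 1 + 1)) := by
      apply σB_comm
      have : (1:ℕ+) ≤ i := i.one_le
      calc (1:ℕ+) + 1 < 1 + 1 + 1 := by decide
        _ ≤ i + 1 + 1 := by
          exact add_le_add_left (add_le_add_left this 1) 1
    rw [hcomm.eq]; group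
  have := congrArg (fun f => (f : Binf →* Binf) g) key
  simp only [MonoidHom.comp_apply, MulEquiv.coe_toMonoidHom, MulAut.conj_apply] at this
  unfold Commute SemiconjBy
  calc σB 1 * s (s g) = σB 1 * s (s g) * (σB 1)⁻¹ * σB 1 := by group
    _ = s (s g) * σB 1 := by rw [this]

theorem stmt10 (s : Binf →* Binf) (hs : ∀ i : ℕ+, s (σB i) = σB (i + 1))
    (op : Binf → Binf → Binf) (hop : ∀ α β : Binf, op α β = α * s β * σB 1 * s α⁻¹)
    (α β γ : Binf) : op α (op β γ) = op (op α β) (op α γ) := by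
  simp only [hop, map_mul, map_inv, hs]
  set a := s α
  set b := s β
  set c := s γ
  set a2 := s a with ha2
  set b2 := s b with hb2
  set c2 := s c with hc2
  set t := σB 1
  set u := σB (1+1)
  have hta2 : Commute t a2 := comm_ss s hs α
  have htb2 : Commute t b2 := comm_ss s hs β
  have htc2 : Commute t c2 := comm_ss s hs γ
  have braid : t * u * t = u * t * u := σB_braid 1
  have e2 : a2⁻¹ * t * a2 = t := by rw [← hta2.inv_right.eq]; group
  calc α * (b * c2 * u * b2⁻¹) * t * a⁻¹
      = α * b * c2 * u * (b2⁻¹ * t) * a⁻¹ := by group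
    _ = α * b * c2 * u * (t * b2⁻¹) * a⁻¹ := by rw [← htb2.inv_right.eq]
    _ = α * b * c2 * (u * t * u) * (u⁻¹ * b2⁻¹ * a⁻¹) := by group
    _ = α * b * c2 * (t * u * t) * (u⁻¹ * b2⁻¹ * a⁻¹) := by rw [← braid]
    _ = α * b * (c2 * t) * (u * t * (u⁻¹ * b2⁻¹ * a⁻¹)) := by group
    _ = α * b * (t * c2) * (u * t * (u⁻¹ * b2⁻¹ * a⁻¹)) := by rw [← htc2.eq]
    _ = α * b * t * (c2 * u * (a2⁻¹ * t * a2) * u⁻¹ * b2⁻¹ * a⁻¹) := by rw [e2]; group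
    _ = α * b * t * a⁻¹ * (a * c2 * u * a2⁻¹) * t * (a2 * u⁻¹ * b2⁻¹ * a⁻¹) := by group
    _ = α * b * t * a⁻¹ * (a * c2 * u * a2⁻¹) * t * (a * b2 * u * a2⁻¹)⁻¹ := by group
end

section
/- For any α, β_1, …, β_k in B_∞, the element α^{-1} · (((α * β_1) * β_2 * ⋯) * β_k) can be written as a word in the generators {σ_1, σ_2, …} and inverses {σ_2^{-1}, σ_3^{-1}, …} containing at least one occurrence of σ_1 and no occurrence of σ_1^{-1}. -/
noncomputable def wrd (l : List (ℕ+ × Bool)) : Binf :=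
  (l.map fun p => if p.2 then σB p.1 else (σB p.1)⁻¹).prod

lemma wrd_append (l₁ l₂ : List (ℕ+ × Bool)) : wrd (l₁ ++ l₂) = wrd l₁ * wrd l₂ := by
  simp [wrd]

lemma wrd_exists (g : Binf) : ∃ l, wrd l = g := by
  obtain ⟨f, rfl⟩ := PresentedGroup.mk_surjective braidRels g
  refine ⟨f.toWord, ?_⟩
  have h1 : PresentedGroup.mk braidRels f
      = PresentedGroup.mk braidRels (FreeGroup.mk f.toWord) := by
    rw [f.mk_toWord]
  rw [h1]
  have h2 : (PresentedGroup.mk braidRels) (FreeGroup.mk f.toWord)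
      = FreeGroup.lift σB (FreeGroup.mk f.toWord) := by
    have : PresentedGroup.mk braidRels = FreeGroup.lift σB := by
      apply FreeGroup.ext_hom
      intro a
      simp [FreeGroup.lift_apply_of, σB, PresentedGroup.of]
    rw [this]
  rw [h2, FreeGroup.lift_mk]
  simp only [wrd]
  congr 1
  apply List.map_congr_left
  intro p _
  cases p.2 <;> simp

lemma wrd_shift (s : Binf →* Binf) (hs : ∀ i : ℕ+, s (σB i) = σB (i + 1))
    (l : List (ℕ+ × Bool)) :
    s (wrd l) = wrd (l.map fun p => (p.1 + 1, p.2)) := by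
  induction l with
  | nil => simp [wrd]
  | cons p t ih =>
    cases p with
    | mk i b =>
      cases b <;>
        simp only [wrd, List.map_cons, List.prod_cons, List.map_map, if_true, if_false,
          Bool.false_eq_true, map_mul, map_inv, hs i] <;>
        [skip; skip] <;>
        · rw [show (List.map (fun p => if p.2 = true then σB p.1 else (σB p.1)⁻¹) t).prod = wrd t from rfl, ih]
          simp [wrd]

lemma shift_no_one (l : List (ℕ+ × Bool)) (b : Bool) :
    ((1 : ℕ+), b) ∉ l.map fun p => (p.1 + 1, p.2) := by
  intro hmem
  rw [List.mem_map] at hmem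
  obtain ⟨p, -, h⟩ := hmem
  have := congrArg (fun q => (q.1 : ℕ)) h
  simp at this

lemma key (s : Binf →* Binf) (hs : ∀ i : ℕ+, s (σB i) = σB (i + 1))
    (op : Binf → Binf → Binf) (hop : ∀ α β : Binf, op α β = α * s β * σB 1 * s α⁻¹)
    (L : List Binf) (hL : L ≠ []) (γ : Binf) :
    ∃ l : List (ℕ+ × Bool),
      γ⁻¹ * List.foldl op γ L = wrd l ∧ (1, true) ∈ l ∧ (1, false) ∉ l := by
  induction L using List.reverseRecOn with
  | nil => exact absurd rfl hL
  | append_singleton L b ih =>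
    obtain ⟨lb, hlb⟩ := wrd_exists b
    rcases eq_or_ne L [] with rfl | hne
    · obtain ⟨lg, hlg⟩ := wrd_exists γ⁻¹
      refine ⟨(lb.map fun p => (p.1+1, p.2)) ++ [(1, true)] ++ (lg.map fun p => (p.1+1, p.2)), ?_, ?_, ?_⟩
      · simp only [List.foldl, hop, List.nil_append]
        rw [wrd_append, wrd_append, ← wrd_shift s hs, ← wrd_shift s hs, hlb, hlg]
        simp [wrd, σB]
        group
      · simp
      · intro h
        simp only [List.mem_append, List.mem_singleton] at h
        rcases h with (h | h) | h
        · exact shift_no_one lb false h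
        · simp at h
        · exact shift_no_one lg false h
    · obtain ⟨l₀, hl₀, hmem, hnot⟩ := ih hne
      set δ := List.foldl op γ L with hδ
      obtain ⟨ld, hld⟩ := wrd_exists δ⁻¹
      refine ⟨l₀ ++ (lb.map fun p => (p.1+1, p.2)) ++ [(1, true)] ++ (ld.map fun p => (p.1+1, p.2)), ?_, ?_, ?_⟩
      · rw [List.foldl_append]
        simp only [List.foldl, hop]
        rw [wrd_append, wrd_append, wrd_append, ← wrd_shift s hs, ← wrd_shift s hs,
          hlb, hld, ← hl₀]
        simp [wrd, σB, ← hδ]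
        group
      · simp [hmem]
      · intro h
        simp only [List.mem_append, List.mem_singleton] at h
        rcases h with ((h | h) | h) | h
        · exact hnot h
        · exact shift_no_one lb false h
        · simp at h
        · exact shift_no_one ld false h

theorem stmt12 (s : Binf →* Binf) (hs : ∀ i : ℕ+, s (σB i) = σB (i + 1))
    (op : Binf → Binf → Binf) (hop : ∀ α β : Binf, op α β = α * s β * σB 1 * s α⁻¹)
    (k : ℕ) (hk : 1 ≤ k) (α : Binf) (β : Fin k → Binf) :
    ∃ l : List (ℕ+ × Bool),
      α⁻¹ * List.foldl op α (List.ofFn β)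
        = (l.map fun p => if p.2 then σB p.1 else (σB p.1)⁻¹).prod ∧
      (1, true) ∈ l ∧ (1, false) ∉ l := by
  have hne : List.ofFn β ≠ [] := by
    simp [List.ofFn_eq_nil_iff]
    omega
  exact key s hs op hop (List.ofFn β) hne α
end
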